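/- arXiv:1403.6361 — 5 statements merged into one kernel-verified Lean document; each statement's English description precedes it below -/
import Mathlib

section
/- Let ρ be a density matrix on a finite-dimensional complex Hilbert space, let α > 1 and let ε ∈ (0,1). Then the smooth min-entropy of ρ is bounded below by its Rényi α-entropy as H_min^ε(ρ) ≥ H_α(ρ) − (1/(α−1))·log(1/ε). -/
open scoped BigOperators ComplexOrder

noncomputable section

/-- The trace norm of a matrix: the trace of the positive square root of `Xᴴ * X`
(for Hermitian `X` this is the sum of the absolute values of the eigenvalues). -/
def traceNorm {n : Type*} [Fintype n] [DecidableEq n] (X : Matrix n n ℂ) : ℝ :=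
  (((Matrix.PosSemidef.isHermitian (Matrix.posSemidef_conjTranspose_mul_self X)).eigenvectorUnitary
        : Matrix n n ℂ)
      * Matrix.diagonal (((↑) : ℝ → ℂ) ∘ Real.sqrt ∘
        (Matrix.PosSemidef.isHermitian (Matrix.posSemidef_conjTranspose_mul_self X)).eigenvalues)
      * (star (Matrix.PosSemidef.isHermitian
        (Matrix.posSemidef_conjTranspose_mul_self X)).eigenvectorUnitary : Matrix n n ℂ)).trace.re

namespace SME
open scoped Matrix
variable {n : ℕ} (V : Matrix.unitaryGroup (Fin n) ℂ)

lemma V_mul_star : (V : Matrix (Fin n) (Fin n) ℂ) * star (V : Matrix (Fin n) (Fin n) ℂ) = 1 :=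
  (Matrix.mem_unitaryGroup_iff).mp V.2

lemma star_mul_V : star (V : Matrix (Fin n) (Fin n) ℂ) * (V : Matrix (Fin n) (Fin n) ℂ) = 1 :=
  V.2.1

lemma conjD_mul (f g : Fin n → ℂ) :
    ((V : Matrix (Fin n) (Fin n) ℂ) * Matrix.diagonal f * star (V : Matrix (Fin n) (Fin n) ℂ)) *
      ((V : Matrix (Fin n) (Fin n) ℂ) * Matrix.diagonal g * star (V : Matrix (Fin n) (Fin n) ℂ))
    = (V : Matrix (Fin n) (Fin n) ℂ) * Matrix.diagonal (f * g) *
        star (V : Matrix (Fin n) (Fin n) ℂ) := by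
  have h := star_mul_V V
  calc _ = (V : Matrix (Fin n) (Fin n) ℂ) * Matrix.diagonal f *
        ((star (V : Matrix (Fin n) (Fin n) ℂ) * (V : Matrix (Fin n) (Fin n) ℂ)) *
          (Matrix.diagonal g * star (V : Matrix (Fin n) (Fin n) ℂ))) := by
        simp only [Matrix.mul_assoc]
    _ = _ := by
        rw [h, one_mul, ← Matrix.mul_assoc, Matrix.mul_assoc (V : Matrix (Fin n) (Fin n) ℂ)
          (Matrix.diagonal f) (Matrix.diagonal g), Matrix.diagonal_mul_diagonal]
        rfl

lemma conjD_trace (f : Fin n → ℂ) :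
    ((V : Matrix (Fin n) (Fin n) ℂ) * Matrix.diagonal f *
      star (V : Matrix (Fin n) (Fin n) ℂ)).trace = ∑ i, f i := by
  rw [Matrix.trace_mul_cycle, star_mul_V, one_mul, Matrix.trace_diagonal]

lemma conjD_herm (d : Fin n → ℝ) :
    ((V : Matrix (Fin n) (Fin n) ℂ) * Matrix.diagonal (Complex.ofReal ∘ d) *
      star (V : Matrix (Fin n) (Fin n) ℂ)).IsHermitian := by
  have hd : (Matrix.diagonal (Complex.ofReal ∘ d)).conjTranspose
      = Matrix.diagonal (Complex.ofReal ∘ d) := by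
    rw [Matrix.diagonal_conjTranspose]
    have : star (Complex.ofReal ∘ d) = Complex.ofReal ∘ d := by
      funext i
      show star (Complex.ofReal (d i)) = _
      exact Complex.conj_ofReal (d i)
    rw [this]
  unfold Matrix.IsHermitian
  rw [Matrix.conjTranspose_mul, Matrix.conjTranspose_mul, hd, ← Matrix.star_eq_conjTranspose,
    ← Matrix.star_eq_conjTranspose, star_star, Matrix.mul_assoc]

lemma conjD_psd (d : Fin n → ℝ) (hd : ∀ i, 0 ≤ d i) :
    ((V : Matrix (Fin n) (Fin n) ℂ) * Matrix.diagonal (Complex.ofReal ∘ d) *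
      star (V : Matrix (Fin n) (Fin n) ℂ)).PosSemidef := by
  have : (Matrix.diagonal (Complex.ofReal ∘ d)).PosSemidef := by
    refine Matrix.PosSemidef.diagonal fun i => ?_
    simpa using Complex.zero_le_real.mpr (hd i)
  simpa [Matrix.star_eq_conjTranspose] using this.mul_mul_conjTranspose_same
    (V : Matrix (Fin n) (Fin n) ℂ)


lemma trace_eq_sum_eig {A : Matrix (Fin n) (Fin n) ℂ} (hA : A.IsHermitian) :
    A.trace = ((∑ i, hA.eigenvalues i : ℝ) : ℂ) := by
  conv_lhs => rw [hA.spectral_theorem]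
  rw [Unitary.conjStarAlgAut_apply, conjD_trace hA.eigenvectorUnitary]
  push_cast
  rfl

lemma eig_le {A : Matrix (Fin n) (Fin n) ℂ} (hA : A.IsHermitian) {c : ℝ}
    (h : (((c : ℂ) • (1 : Matrix (Fin n) (Fin n) ℂ)) - A).PosSemidef) (i : Fin n) :
    hA.eigenvalues i ≤ c := by
  set v : Fin n → ℂ := ⇑(hA.eigenvectorBasis i) with hv
  have hvv : dotProduct (star v) v = 1 := by
    have h1 : ‖hA.eigenvectorBasis i‖ = 1 := hA.eigenvectorBasis.orthonormal.1 i
    have h2 : (inner ℂ (hA.eigenvectorBasis i) (hA.eigenvectorBasis i) : ℂ)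
        = dotProduct (star v) v := by
      rw [EuclideanSpace.inner_eq_star_dotProduct, dotProduct_comm]
    rw [← h2, inner_self_eq_norm_sq_to_K, h1]
    norm_num
  have h3 : (((c : ℂ) • (1 : Matrix (Fin n) (Fin n) ℂ)) - A) *ᵥ v
      = ((c - hA.eigenvalues i : ℝ) : ℂ) • v := by
    rw [Matrix.sub_mulVec, Matrix.smul_mulVec, Matrix.one_mulVec,
      hA.mulVec_eigenvectorBasis]
    funext j
    simp only [Pi.sub_apply, Pi.smul_apply, smul_eq_mul, Complex.real_smul]
    push_cast
    ring
  have h2 := h.dotProduct_mulVec_nonneg v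
  rw [h3, dotProduct_smul, hvv, smul_eq_mul, mul_one] at h2
  have := Complex.zero_le_real.mp h2
  linarith

lemma traceNorm_conjD (d : Fin n → ℝ) :
    traceNorm ((V : Matrix (Fin n) (Fin n) ℂ) * Matrix.diagonal (Complex.ofReal ∘ d) *
      star (V : Matrix (Fin n) (Fin n) ℂ)) = ∑ i, |d i| := by
  set X := (V : Matrix (Fin n) (Fin n) ℂ) * Matrix.diagonal (Complex.ofReal ∘ d) *
      star (V : Matrix (Fin n) (Fin n) ℂ) with hX
  set Y := (V : Matrix (Fin n) (Fin n) ℂ) * Matrix.diagonal (Complex.ofReal ∘ (fun i => |d i|)) *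
      star (V : Matrix (Fin n) (Fin n) ℂ) with hYdef
  have hherm : Xᴴ = X := conjD_herm V d
  have hY : Y.PosSemidef := conjD_psd V (fun i => |d i|) (fun i => abs_nonneg _)
  have hsq : Y ^ 2 = Xᴴ * X := by
    rw [pow_two, hherm, hX, hYdef, conjD_mul, conjD_mul]
    have : (Complex.ofReal ∘ fun i => |d i|) * (Complex.ofReal ∘ fun i => |d i|)
        = (Complex.ofReal ∘ d) * (Complex.ofReal ∘ d) := by
      funext i
      show ((|d i| : ℝ) : ℂ) * ((|d i| : ℝ) : ℂ) = ((d i : ℝ) : ℂ) * ((d i : ℝ) : ℂ)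
      rw [← Complex.ofReal_mul, ← Complex.ofReal_mul, abs_mul_abs_self]
    rw [this]
  have hsqrt : cfc Real.sqrt (Xᴴ * X) = Y := by
    open MatrixOrder in
    rw [← hsq, ← cfcₙ_eq_cfc (f := Real.sqrt) (hf0 := Real.sqrt_zero), ← CFC.sqrt_eq_real_sqrt _ (by rw [hsq]; exact (Matrix.posSemidef_conjTranspose_mul_self X).nonneg), CFC.sqrt_sq Y hY.nonneg]
  have htn : traceNorm X = (cfc Real.sqrt (Xᴴ * X)).trace.re := by
    rw [(Matrix.posSemidef_conjTranspose_mul_self X).isHermitian.cfc_eq]; rfl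
  rw [htn, hsqrt, hYdef, conjD_trace]
  rw [show (∑ i, ((Complex.ofReal ∘ fun i => |d i|) i)) = ((∑ i, |d i| : ℝ) : ℂ) by push_cast; rfl]
  exact Complex.ofReal_re _


lemma exists_mu {n : ℕ} (hn : 0 < n) (l : Fin n → ℝ) (hl0 : ∀ i, 0 ≤ l i)
    (hl1 : ∑ i, l i = 1) {α ε : ℝ} (hα : 1 < α) (hε0 : 0 < ε) (hε1 : ε < 1) :
    ∃ μ : Fin n → ℝ, (∀ i, 0 ≤ μ i) ∧ (∑ i, μ i = 1) ∧
      (∀ i, μ i ≤ ((∑ j, l j ^ α) / ε) ^ (1/(α-1))) ∧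
      (∑ i, |l i - μ i| ≤ 2 * ε) := by
  have hα1 : 0 < α - 1 := by linarith
  have hn' : (0:ℝ) < n := by exact_mod_cast hn
  set S := ∑ j, l j ^ α with hS
  have hS0 : 0 < S := by
    obtain ⟨i, hi⟩ : ∃ i, l i ≠ 0 := by
      by_contra hcon
      push_neg at hcon
      rw [Finset.sum_eq_zero (fun i _ => hcon i)] at hl1
      norm_num at hl1
    exact Finset.sum_pos' (fun j _ => Real.rpow_nonneg (hl0 j) α)
      ⟨i, Finset.mem_univ i, Real.rpow_pos_of_pos ((hl0 i).lt_of_ne (Ne.symm hi)) α⟩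
  have hSn : (n:ℝ) ^ (1 - α) ≤ S := by
    have hterm : ∀ i : Fin n, 1 + α * ((n:ℝ) * l i - 1) ≤ ((n:ℝ) * l i) ^ α := by
      intro i
      have h := one_add_mul_self_le_rpow_one_add
        (s := (n:ℝ) * l i - 1) (by nlinarith [hl0 i]) hα.le
      simpa using h
    have key : (n:ℝ) ≤ (n:ℝ)^α * S := by
      have h1 : ∑ i : Fin n, (1 + α * ((n:ℝ) * l i - 1)) = (n:ℝ) := by
        rw [Finset.sum_add_distrib, ← Finset.mul_sum, Finset.sum_sub_distrib,
          ← Finset.mul_sum, hl1, mul_one]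
        simp
      have h2 : ∑ i : Fin n, ((n:ℝ) * l i) ^ α = (n:ℝ)^α * S := by
        rw [Finset.mul_sum]
        exact Finset.sum_congr rfl fun i _ => Real.mul_rpow hn'.le (hl0 i)
      calc (n:ℝ) = ∑ i : Fin n, (1 + α * ((n:ℝ) * l i - 1)) := h1.symm
        _ ≤ ∑ i : Fin n, ((n:ℝ) * l i) ^ α := Finset.sum_le_sum fun i _ => hterm i
        _ = (n:ℝ)^α * S := h2
    have hrw : (n:ℝ)^(1-α) = (n:ℝ) / (n:ℝ)^α := by
      rw [Real.rpow_sub hn', Real.rpow_one]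
    rw [hrw, div_le_iff₀ (Real.rpow_pos_of_pos hn' α)]
    nlinarith [Real.rpow_pos_of_pos hn' α]
  set c := (S/ε) ^ (1/(α-1)) with hc
  have hc0 : 0 < c := Real.rpow_pos_of_pos (by positivity) _
  have hcpow : c ^ (α-1) = S/ε := by
    rw [hc, ← Real.rpow_mul (by positivity), one_div_mul_cancel (ne_of_gt hα1), Real.rpow_one]
  have hcn : 1 < (n:ℝ) * c := by
    have h1 : ((1:ℝ)/n) ^ (α-1) < c ^ (α-1) := by
      rw [hcpow]
      have e1 : ((1:ℝ)/n)^(α-1) = (n:ℝ)^(1-α) := by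
        rw [one_div, Real.inv_rpow hn'.le, ← Real.rpow_neg hn'.le]
        ring_nf
      have e2 : S < S / ε := by
        rw [lt_div_iff₀ hε0]; nlinarith
      calc ((1:ℝ)/n)^(α-1) = (n:ℝ)^(1-α) := e1
        _ ≤ S := hSn
        _ < S / ε := e2
    by_contra hcon
    push_neg at hcon
    have h2 : c ≤ 1/n := by rw [le_div_iff₀ hn']; linarith
    have := Real.rpow_le_rpow hc0.le h2 hα1.le
    linarith
  set m := ∑ i, (l i - min (l i) c) with hm
  have hm0 : 0 ≤ m := Finset.sum_nonneg fun i _ => sub_nonneg.mpr (min_le_left _ _)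
  have hmε : m ≤ ε := by
    have hterm : ∀ i : Fin n, l i - min (l i) c ≤ l i ^ α / c ^ (α-1) := by
      intro i
      rcases le_or_gt (l i) c with h | h
      · rw [min_eq_left h]
        have : (0:ℝ) ≤ l i ^ α / c ^ (α-1) :=
          div_nonneg (Real.rpow_nonneg (hl0 i) α) (Real.rpow_nonneg hc0.le _)
        linarith
      · rw [min_eq_right h.le]
        have hli : 0 < l i := lt_trans hc0 h
        have h2 : c ^ (α-1) ≤ l i ^ (α-1) := Real.rpow_le_rpow hc0.le h.le (by linarith)
        rw [le_div_iff₀ (Real.rpow_pos_of_pos hc0 _)]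
        have h3 : l i ^ α = l i * l i ^ (α-1) := by
          rw [← Real.rpow_one_add' hli.le (by linarith)]
          ring_nf
        rw [h3]
        nlinarith [Real.rpow_pos_of_pos hc0 (α-1), Real.rpow_pos_of_pos hli (α-1)]
    calc m ≤ ∑ i, l i ^ α / c^(α-1) := Finset.sum_le_sum fun i _ => hterm i
      _ = S / c^(α-1) := by rw [← Finset.sum_div]
      _ = ε := by rw [hcpow]; field_simp
  set D := (n:ℝ) * c - 1 + m with hD
  have hDpos : 0 < D := by simp only [hD]; linarith
  refine ⟨fun i => min (l i) c + m * (c - min (l i) c) / D, ?_, ?_, ?_, ?_⟩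
  · intro i
    exact add_nonneg (le_min (hl0 i) hc0.le)
      (div_nonneg (mul_nonneg hm0 (sub_nonneg.mpr (min_le_right _ _))) hDpos.le)
  · have hsummin : ∑ i, min (l i) c = 1 - m := by
      have : m = 1 - ∑ i, min (l i) c := by
        rw [hm, Finset.sum_sub_distrib, hl1]
      linarith
    rw [Finset.sum_add_distrib, hsummin]
    have hreste : ∑ i, m * (c - min (l i) c) / D = m * ((n:ℝ)*c - (1-m)) / D := by
      rw [← Finset.sum_div, ← Finset.mul_sum, Finset.sum_sub_distrib, Finset.sum_const,
        Finset.card_univ, Fintype.card_fin, hsummin, nsmul_eq_mul]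
    rw [hreste]
    have : (n:ℝ)*c - (1-m) = D := by rw [hD]; ring
    rw [this, mul_div_assoc, div_self hDpos.ne', mul_one]
    ring
  · intro i
    have hmD : m / D ≤ 1 := (div_le_one hDpos).mpr (by simp only [hD]; linarith)
    have h2 : m * (c - min (l i) c) / D ≤ c - min (l i) c := by
      have e : m * (c - min (l i) c) / D = (c - min (l i) c) * (m/D) := by ring
      rw [e]
      calc (c - min (l i) c) * (m/D) ≤ (c - min (l i) c) * 1 :=
            mul_le_mul_of_nonneg_left hmD (sub_nonneg.mpr (min_le_right _ _))
        _ = c - min (l i) c := mul_one _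
    have := min_le_right (l i) c
    show min (l i) c + m * (c - min (l i) c) / D ≤ c
    linarith
  · have hsummin : ∑ i, min (l i) c = 1 - m := by
      have : m = 1 - ∑ i, min (l i) c := by
        rw [hm, Finset.sum_sub_distrib, hl1]
      linarith
    have hμsum : ∑ i, (min (l i) c + m * (c - min (l i) c) / D) = 1 := by
      rw [Finset.sum_add_distrib, hsummin]
      have hreste : ∑ i, m * (c - min (l i) c) / D = m * ((n:ℝ)*c - (1-m)) / D := by
        rw [← Finset.sum_div, ← Finset.mul_sum, Finset.sum_sub_distrib, Finset.sum_const,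
          Finset.card_univ, Fintype.card_fin, hsummin, nsmul_eq_mul]
      rw [hreste]
      have : (n:ℝ)*c - (1-m) = D := by rw [hD]; ring
      rw [this, mul_div_assoc, div_self hDpos.ne', mul_one]
      ring
    have hterm : ∀ i : Fin n, |l i - (min (l i) c + m * (c - min (l i) c) / D)|
        ≤ (l i - min (l i) c) + ((min (l i) c + m * (c - min (l i) c) / D) - min (l i) c) := by
      intro i
      have h1 : min (l i) c ≤ l i := min_le_left _ _
      have h2 : (0:ℝ) ≤ m * (c - min (l i) c) / D :=
        div_nonneg (mul_nonneg hm0 (sub_nonneg.mpr (min_le_right _ _))) hDpos.le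
      rw [abs_le]
      constructor <;> [nlinarith; nlinarith]
    calc ∑ i, |l i - (min (l i) c + m * (c - min (l i) c) / D)|
        ≤ ∑ i, ((l i - min (l i) c) + ((min (l i) c + m * (c - min (l i) c) / D) - min (l i) c)) :=
          Finset.sum_le_sum fun i _ => hterm i
      _ = m + (1 - (1 - m)) := by
          rw [Finset.sum_add_distrib, ← hm, Finset.sum_sub_distrib, hμsum, hsummin]
      _ ≤ 2 * ε := by linarith
end SME

/-- For a density matrix ρ, α > 1 and ε ∈ (0,1), the smooth min-entropy
(with logarithms base 2) is bounded below by the Rényi α-entropy: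
`H_min^ε(ρ) ≥ H_α(ρ) − (1/(α−1))·log(1/ε)`. -/
theorem smooth_min_entropy_ge_renyi
    {n : ℕ} (ρ : Matrix (Fin n) (Fin n) ℂ)
    (hρ : ρ.PosSemidef) (hρ1 : ρ.trace = 1)
    (α : ℝ) (hα : 1 < α) (ε : ℝ) (hε0 : 0 < ε) (hε1 : ε < 1) :
    sSup { h : ℝ | ∃ (ρ' : Matrix (Fin n) (Fin n) ℂ) (hρ' : ρ'.PosSemidef),
        ρ'.trace = 1 ∧ (1/2) * traceNorm (ρ - ρ') ≤ ε ∧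
        h = - Real.logb 2 (⨆ i, hρ'.isHermitian.eigenvalues i) }
    ≥ (1 / (1 - α)) * Real.logb 2 (∑ i, hρ.isHermitian.eigenvalues i ^ α)
        - (1 / (α - 1)) * Real.logb 2 (1 / ε) := by
  classical
  have hn : 0 < n := by
    rcases Nat.eq_zero_or_pos n with h | h
    · subst h
      simp [Matrix.trace] at hρ1
    · exact h
  haveI : Nonempty (Fin n) := ⟨⟨0, hn⟩⟩
  have hn' : (0:ℝ) < n := by exact_mod_cast hn
  have hα1 : 0 < α - 1 := by linarith
  set hH := hρ.isHermitian with hHdef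
  set l := hH.eigenvalues with hldef
  have hl0 : ∀ i, 0 ≤ l i := fun i => hρ.eigenvalues_nonneg i
  have hl1 : ∑ i, l i = 1 := by
    have := SME.trace_eq_sum_eig hH
    rw [hρ1] at this
    exact_mod_cast this.symm
  obtain ⟨μ, hμ0, hμsum, hμc, hμdist⟩ := SME.exists_mu hn l hl0 hl1 hα hε0 hε1
  set S := ∑ j, l j ^ α with hSdef
  set c := (S / ε) ^ (1/(α-1)) with hcdef
  have hS0 : 0 < S := by
    obtain ⟨i, hi⟩ : ∃ i, l i ≠ 0 := by
      by_contra hcon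
      push_neg at hcon
      rw [Finset.sum_eq_zero (fun i _ => hcon i)] at hl1
      norm_num at hl1
    exact Finset.sum_pos' (fun j _ => Real.rpow_nonneg (hl0 j) α)
      ⟨i, Finset.mem_univ i, Real.rpow_pos_of_pos ((hl0 i).lt_of_ne (Ne.symm hi)) α⟩
  have hc0 : 0 < c := Real.rpow_pos_of_pos (by positivity) _
  set V := hH.eigenvectorUnitary with hVdef
  set ρ' := (V : Matrix (Fin n) (Fin n) ℂ) * Matrix.diagonal (Complex.ofReal ∘ μ) *
      star (V : Matrix (Fin n) (Fin n) ℂ) with hρ'def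
  have hρ'psd : ρ'.PosSemidef := SME.conjD_psd V μ hμ0
  have hρ'tr : ρ'.trace = 1 := by
    rw [hρ'def, SME.conjD_trace]
    rw [show (∑ i, ((Complex.ofReal ∘ μ) i)) = ((∑ i, μ i : ℝ) : ℂ) by push_cast; rfl, hμsum]
    norm_num
  have hspec : ρ = (V : Matrix (Fin n) (Fin n) ℂ) * Matrix.diagonal (Complex.ofReal ∘ l) *
      star (V : Matrix (Fin n) (Fin n) ℂ) := hH.spectral_theorem
  have hdiff : ρ - ρ' = (V : Matrix (Fin n) (Fin n) ℂ) *
      Matrix.diagonal (Complex.ofReal ∘ (fun i => l i - μ i)) *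
      star (V : Matrix (Fin n) (Fin n) ℂ) := by
    rw [hspec, hρ'def, ← Matrix.sub_mul, ← Matrix.mul_sub, Matrix.diagonal_sub]
    have e : (fun i => (Complex.ofReal ∘ l) i - (Complex.ofReal ∘ μ) i)
        = Complex.ofReal ∘ (fun i => l i - μ i) := by
      funext i
      simp [Complex.ofReal_sub]
    rw [e]
  have hdist : (1/2) * traceNorm (ρ - ρ') ≤ ε := by
    rw [hdiff, SME.traceNorm_conjD]
    linarith
  -- the eigenvalues of ρ' are bounded by c
  have hub : ∀ i, hρ'psd.isHermitian.eigenvalues i ≤ c := by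
    have hid : ((c:ℂ) • (1 : Matrix (Fin n) (Fin n) ℂ)) - ρ'
        = (V : Matrix (Fin n) (Fin n) ℂ) *
          Matrix.diagonal (Complex.ofReal ∘ (fun i => c - μ i)) *
          star (V : Matrix (Fin n) (Fin n) ℂ) := by
      have h1 : ((c:ℂ) • (1 : Matrix (Fin n) (Fin n) ℂ))
          = (V : Matrix (Fin n) (Fin n) ℂ) *
            Matrix.diagonal (Complex.ofReal ∘ (fun _ : Fin n => c)) *
            star (V : Matrix (Fin n) (Fin n) ℂ) := by
        have h2 : Matrix.diagonal (Complex.ofReal ∘ (fun _ : Fin n => c))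
            = (c:ℂ) • (1 : Matrix (Fin n) (Fin n) ℂ) := by
          rw [Matrix.smul_one_eq_diagonal]
          rfl
        rw [h2, Matrix.mul_smul, Matrix.mul_one, Matrix.smul_mul, SME.V_mul_star]
      rw [h1, hρ'def, ← Matrix.sub_mul, ← Matrix.mul_sub, Matrix.diagonal_sub]
      have e : (fun i => (Complex.ofReal ∘ (fun _ : Fin n => c)) i - (Complex.ofReal ∘ μ) i)
          = Complex.ofReal ∘ (fun i => c - μ i) := by
        funext i
        simp [Complex.ofReal_sub]
      rw [e]
    have hpsd2 : (((c:ℂ) • (1 : Matrix (Fin n) (Fin n) ℂ)) - ρ').PosSemidef := by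
      rw [hid]
      exact SME.conjD_psd V (fun i => c - μ i) (fun i => sub_nonneg.mpr (hμc i))
    exact fun i => SME.eig_le hρ'psd.isHermitian hpsd2 i
  set t := ⨆ i, hρ'psd.isHermitian.eigenvalues i with htdef
  have htc : t ≤ c := ciSup_le hub
  have ht0 : 0 < t := by
    have hsum' : ∑ i, hρ'psd.isHermitian.eigenvalues i = 1 := by
      have := SME.trace_eq_sum_eig hρ'psd.isHermitian
      rw [hρ'tr] at this
      exact_mod_cast this.symm
    obtain ⟨i, hi⟩ : ∃ i, hρ'psd.isHermitian.eigenvalues i ≠ 0 := by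
      by_contra hcon
      push_neg at hcon
      rw [Finset.sum_eq_zero (fun i _ => hcon i)] at hsum'
      norm_num at hsum'
    have hipos : 0 < hρ'psd.isHermitian.eigenvalues i :=
      (hρ'psd.eigenvalues_nonneg i).lt_of_ne (Ne.symm hi)
    exact lt_of_lt_of_le hipos
      (le_ciSup (Set.Finite.bddAbove (Set.finite_range _)) i)
  -- membership
  have hmem : - Real.logb 2 t ∈ { h : ℝ | ∃ (ρ' : Matrix (Fin n) (Fin n) ℂ)
      (hρ' : ρ'.PosSemidef), ρ'.trace = 1 ∧ (1/2) * traceNorm (ρ - ρ') ≤ ε ∧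
      h = - Real.logb 2 (⨆ i, hρ'.isHermitian.eigenvalues i) } :=
    ⟨ρ', hρ'psd, hρ'tr, hdist, rfl⟩
  -- bounded above
  have hbdd : BddAbove { h : ℝ | ∃ (ρ' : Matrix (Fin n) (Fin n) ℂ)
      (hρ' : ρ'.PosSemidef), ρ'.trace = 1 ∧ (1/2) * traceNorm (ρ - ρ') ≤ ε ∧
      h = - Real.logb 2 (⨆ i, hρ'.isHermitian.eigenvalues i) } := by
    refine ⟨Real.logb 2 n, ?_⟩
    rintro h ⟨σ, hσ, hσtr, -, rfl⟩
    have hsumσ : ∑ i, hσ.isHermitian.eigenvalues i = 1 := by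
      have := SME.trace_eq_sum_eig hσ.isHermitian
      rw [hσtr] at this
      exact_mod_cast this.symm
    set t' := ⨆ i, hσ.isHermitian.eigenvalues i with ht'def
    have hle : ∀ i, hσ.isHermitian.eigenvalues i ≤ t' :=
      fun i => le_ciSup (Set.Finite.bddAbove (Set.finite_range _)) i
    have h1n : 1 ≤ (n:ℝ) * t' := by
      calc (1:ℝ) = ∑ i, hσ.isHermitian.eigenvalues i := hsumσ.symm
        _ ≤ ∑ _i : Fin n, t' := Finset.sum_le_sum fun i _ => hle i
        _ = (n:ℝ) * t' := by rw [Finset.sum_const, Finset.card_univ, Fintype.card_fin,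
              nsmul_eq_mul]
    have ht'0 : 0 < t' := by nlinarith
    have hinv : (1:ℝ)/n ≤ t' := by rw [div_le_iff₀ hn'] at *; nlinarith
    have := Real.logb_le_logb_of_le one_lt_two (by positivity : (0:ℝ) < 1/n) hinv
    rw [one_div, Real.logb_inv] at this
    linarith
  -- final chain
  have hfin : - Real.logb 2 c ≤ - Real.logb 2 t := by
    have := Real.logb_le_logb_of_le one_lt_two ht0 htc
    linarith
  have hrhs : (1 / (1 - α)) * Real.logb 2 S - (1 / (α - 1)) * Real.logb 2 (1 / ε)
      = - Real.logb 2 c := by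
    rw [hcdef, Real.logb_rpow_eq_mul_logb_of_pos (by positivity),
      Real.logb_div hS0.ne' hε0.ne', one_div ε, Real.logb_inv]
    have e : (1:ℝ)/(1-α) = -(1/(α-1)) := by
      rw [show (1:ℝ)-α = -(α-1) by ring, one_div, inv_neg, ← one_div]
    rw [e]
    ring
  rw [ge_iff_le, hrhs]
  exact le_trans hfin (le_csSup hbdd hmem)

end
end

section
/- Let ρ be a density matrix on a d-dimensional complex Hilbert space, set ν = 2 + √d, and let α satisfy 1 < α < 1 + (log 3)/(4 log ν). Then H_α(ρ) ≥ H(ρ) − 4(α−1)(log ν)². -/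
open scoped BigOperators ComplexOrder

noncomputable section

section RenyiAux

open Real Finset

private lemma exp_le_quad_of_nonpos {u : ℝ} (hu : u ≤ 0) : Real.exp u ≤ 1 + u + u ^ 2 / 2 := by
  have h1 : 1 + (-u) + (-u) ^ 2 / 2 ≤ Real.exp (-u) :=
    Real.quadratic_le_exp_of_nonneg (by linarith)
  have h2 : Real.exp u * Real.exp (-u) = 1 := by
    rw [← Real.exp_add]; simp
  nlinarith [Real.exp_pos u, Real.exp_pos (-u), sq_nonneg u, sq_nonneg (u * u)]
lemma log_le_div_exp_one {y : ℝ} (hy : 0 < y) : Real.log y ≤ y / Real.exp 1 := by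
  have h := Real.log_le_sub_one_of_pos (show 0 < y / Real.exp 1 by positivity)
  rw [Real.log_div (ne_of_gt hy) (by positivity), Real.log_exp] at h
  linarith

lemma term_bound {d : ℕ} (hd : 0 < d) {x : ℝ} (h0 : 0 ≤ x) (h1 : x ≤ 1) :
    x * Real.log x ^ 2 ≤ x * Real.log d ^ 2
      + (4 * Real.log d / (Real.exp 1 * Real.sqrt d)) * Real.sqrt x
      + 4 / (Real.exp 1 ^ 2 * d) := by
  have hd1 : (1:ℝ) ≤ d := by exact_mod_cast hd
  have hlogd : 0 ≤ Real.log d := Real.log_nonneg hd1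
  have hsd : 0 < Real.sqrt d := Real.sqrt_pos.mpr (by linarith)
  rcases eq_or_lt_of_le h0 with h | hx
  · rw [← h]
    simp only [Real.log_zero, Real.sqrt_zero, mul_zero, zero_mul, zero_add, ne_eq]
    positivity
  · -- x > 0
    have hdx : 0 < (d:ℝ) * x := by positivity
    have hsdx : 0 < Real.sqrt ((d:ℝ) * x) := Real.sqrt_pos.mpr hdx
    have hlx : Real.log x ≤ 0 := Real.log_nonpos h0 h1
    -- -log(d x) ≤ 2 / (e * sqrt (d x))
    have key1 : -Real.log ((d:ℝ) * x) ≤ 2 / (Real.exp 1 * Real.sqrt ((d:ℝ) * x)) := by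
      have h2 := log_le_div_exp_one (show 0 < (Real.sqrt ((d:ℝ)*x))⁻¹ by positivity)
      rw [Real.log_inv, Real.log_sqrt hdx.le] at h2
      have heq : 2 / (Real.exp 1 * Real.sqrt ((d:ℝ) * x))
          = 2 * ((Real.sqrt ((d:ℝ) * x))⁻¹ / Real.exp 1) := by ring
      rw [heq]; linarith
    have key : -Real.log x ≤ Real.log d + 2 / (Real.exp 1 * Real.sqrt ((d:ℝ) * x)) := by
      have := Real.log_mul (by positivity : (d:ℝ) ≠ 0) (ne_of_gt hx)
      linarith
    have hsq : Real.log x ^ 2 ≤ (Real.log d + 2 / (Real.exp 1 * Real.sqrt ((d:ℝ) * x))) ^ 2 := by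
      have h3 : (-Real.log x) ^ 2 ≤ (Real.log d + 2 / (Real.exp 1 * Real.sqrt ((d:ℝ)*x))) ^ 2 :=
        pow_le_pow_left₀ (by linarith) key 2
      nlinarith [h3]
    have hmul : x * Real.log x ^ 2 ≤
        x * (Real.log d + 2 / (Real.exp 1 * Real.sqrt ((d:ℝ) * x))) ^ 2 :=
      mul_le_mul_of_nonneg_left hsq h0
    refine hmul.trans (le_of_eq ?_)
    have hsplit : Real.sqrt ((d:ℝ) * x) = Real.sqrt d * Real.sqrt x :=
      Real.sqrt_mul (by positivity) x
    rw [hsplit]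
    set s := Real.sqrt x with hsdef
    set sd := Real.sqrt d with hsddef
    have hsx : 0 < s := Real.sqrt_pos.mpr hx
    have hxs : x = s ^ 2 := (Real.sq_sqrt h0).symm
    have hds : (d:ℝ) = sd ^ 2 := (Real.sq_sqrt (by positivity)).symm
    rw [hxs, hds]
    have hE : (0:ℝ) < Real.exp 1 := Real.exp_pos 1
    have hsd' : sd ≠ 0 := ne_of_gt hsd
    generalize Real.exp 1 = E at hE ⊢
    field_simp
    ring

lemma sum_sqrt_le {d : ℕ} (lam : Fin d → ℝ) (h0 : ∀ i, 0 ≤ lam i) (hs : ∑ i, lam i = 1) :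
    ∑ i, Real.sqrt (lam i) ≤ Real.sqrt d := by
  have h1 : (∑ i, 1 * Real.sqrt (lam i)) ^ 2 ≤
      (∑ i : Fin d, (1:ℝ) ^ 2) * ∑ i, Real.sqrt (lam i) ^ 2 :=
    Finset.sum_mul_sq_le_sq_mul_sq univ _ _
  simp only [one_mul, one_pow, Finset.sum_const, Finset.card_univ, Fintype.card_fin,
    nsmul_eq_mul, mul_one] at h1
  have h2 : ∑ i, Real.sqrt (lam i) ^ 2 = 1 := by
    rw [← hs]; exact Finset.sum_congr rfl fun i _ => Real.sq_sqrt (h0 i)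
  rw [h2, mul_one] at h1
  exact (Real.le_sqrt (Finset.sum_nonneg fun i _ => Real.sqrt_nonneg _) (Nat.cast_nonneg d)).mpr h1

lemma m_le {d : ℕ} (hd : 0 < d) (lam : Fin d → ℝ) (h0 : ∀ i, 0 ≤ lam i)
    (hs : ∑ i, lam i = 1) :
    ∑ i, lam i * Real.log (lam i) ^ 2 ≤ 9 * Real.log (2 + Real.sqrt d) ^ 2 := by
  have hd1 : (1:ℝ) ≤ d := by exact_mod_cast hd
  have hlogd : 0 ≤ Real.log d := Real.log_nonneg hd1
  have hsd : 0 < Real.sqrt d := Real.sqrt_pos.mpr (by linarith)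
  have hE : (0:ℝ) < Real.exp 1 := Real.exp_pos 1
  have hle1 : ∀ i, lam i ≤ 1 := fun i => by
    rw [← hs]
    exact Finset.single_le_sum (fun j _ => h0 j) (Finset.mem_univ i)
  set L := Real.log (2 + Real.sqrt d) with hL
  -- basic facts about L
  have hL3 : Real.log 3 ≤ L := by
    apply Real.log_le_log (by norm_num)
    have : (1:ℝ) ≤ Real.sqrt d := by
      rw [show (1:ℝ) = Real.sqrt 1 by simp]
      exact Real.sqrt_le_sqrt hd1
    linarith
  have h1L : 1 ≤ Real.log 3 := by
    rw [Real.le_log_iff_exp_le (by norm_num)]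
    calc Real.exp 1 ≤ 2.7182818286 := (Real.exp_one_lt_d9).le
    _ ≤ 3 := by norm_num
  have hLpos : 0 < L := lt_of_lt_of_le (by linarith) hL3
  have hlogd2L : Real.log d ≤ 2 * L := by
    have h1 : Real.log d = 2 * Real.log (Real.sqrt d) := by
      rw [Real.log_sqrt (by positivity)]; ring
    have h2 : Real.log (Real.sqrt d) ≤ L := Real.log_le_log hsd (by linarith)
    linarith
  have h2e : 2 / Real.exp 1 ≤ L := by
    have he2 : (2:ℝ) ≤ Real.exp 1 := by
      calc (2:ℝ) ≤ 2.7182818283 := by norm_num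
      _ ≤ Real.exp 1 := (Real.exp_one_gt_d9).le
    have : 2 / Real.exp 1 ≤ 1 := by
      rw [div_le_one hE]; linarith
    linarith
  -- sum the per-term bounds
  have step1 : ∑ i, lam i * Real.log (lam i) ^ 2 ≤
      Real.log d ^ 2 + (4 * Real.log d / (Real.exp 1 * Real.sqrt d)) * (∑ i, Real.sqrt (lam i))
        + (d : ℝ) * (4 / (Real.exp 1 ^ 2 * d)) := by
    calc ∑ i, lam i * Real.log (lam i) ^ 2
        ≤ ∑ i, (lam i * Real.log d ^ 2
            + (4 * Real.log d / (Real.exp 1 * Real.sqrt d)) * Real.sqrt (lam i)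
            + 4 / (Real.exp 1 ^ 2 * d)) :=
          Finset.sum_le_sum fun i _ => term_bound hd (h0 i) (hle1 i)
      _ = (∑ i, lam i) * Real.log d ^ 2
            + (4 * Real.log d / (Real.exp 1 * Real.sqrt d)) * (∑ i, Real.sqrt (lam i))
            + (d:ℝ) * (4 / (Real.exp 1 ^ 2 * d)) := by
          rw [Finset.sum_add_distrib, Finset.sum_add_distrib, ← Finset.sum_mul,
            ← Finset.mul_sum, Finset.sum_const, Finset.card_univ, Fintype.card_fin,
            nsmul_eq_mul]
      _ = _ := by rw [hs, one_mul]
  have step2 : (4 * Real.log d / (Real.exp 1 * Real.sqrt d)) * (∑ i, Real.sqrt (lam i))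
      ≤ 4 * Real.log d / Real.exp 1 := by
    have hC : 0 ≤ 4 * Real.log d / (Real.exp 1 * Real.sqrt d) := by positivity
    calc (4 * Real.log d / (Real.exp 1 * Real.sqrt d)) * (∑ i, Real.sqrt (lam i))
        ≤ (4 * Real.log d / (Real.exp 1 * Real.sqrt d)) * Real.sqrt d :=
          mul_le_mul_of_nonneg_left (sum_sqrt_le lam h0 hs) hC
      _ = 4 * Real.log d / Real.exp 1 := by
          field_simp
  have step3 : (d : ℝ) * (4 / (Real.exp 1 ^ 2 * d)) = 4 / Real.exp 1 ^ 2 := by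
    have hE' : Real.exp 1 ≠ 0 := ne_of_gt hE
    have hd' : (d:ℝ) ≠ 0 := by positivity
    generalize Real.exp 1 = E at hE' ⊢
    field_simp
  have final : Real.log d ^ 2 + 4 * Real.log d / Real.exp 1 + 4 / Real.exp 1 ^ 2
      ≤ 9 * L ^ 2 := by
    have key : Real.log d + 2 / Real.exp 1 ≤ 3 * L := by linarith
    have hnn : 0 ≤ Real.log d + 2 / Real.exp 1 := by positivity
    have hsq : (Real.log d + 2 / Real.exp 1) ^ 2 ≤ (3 * L) ^ 2 :=
      pow_le_pow_left₀ hnn key 2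
    have hexpand : (Real.log d + 2 / Real.exp 1) ^ 2
        = Real.log d ^ 2 + 4 * Real.log d / Real.exp 1 + 4 / Real.exp 1 ^ 2 := by
      have hE' : Real.exp 1 ≠ 0 := ne_of_gt hE
      generalize Real.exp 1 = E at hE' ⊢
      field_simp; ring
    nlinarith [hsq, hexpand]
  linarith [step1, step2, step3.le, step3.ge, final]
lemma trace_eq_sum_eig {d : ℕ} (ρ : Matrix (Fin d) (Fin d) ℂ) (hρ : ρ.IsHermitian) :
    ρ.trace = ∑ i, (hρ.eigenvalues i : ℂ) := by
  exact hρ.trace_eq_sum_eigenvalues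
lemma main_aux {d : ℕ} (hd : 0 < d) (lam : Fin d → ℝ) (h0 : ∀ i, 0 ≤ lam i)
    (hs : ∑ i, lam i = 1) {α : ℝ} (hα : 1 < α) :
    (1 / (1 - α)) * Real.logb 2 (∑ i, lam i ^ α)
      ≥ (- ∑ i, lam i * Real.logb 2 (lam i))
        - 4 * (α - 1) * (Real.logb 2 (2 + Real.sqrt d)) ^ 2 := by
  have ht : 0 < α - 1 := by linarith
  set t := α - 1 with htdef
  have hle1 : ∀ i, lam i ≤ 1 := fun i => by
    rw [← hs]; exact Finset.single_le_sum (fun j _ => h0 j) (Finset.mem_univ i)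
  set h := ∑ i, lam i * Real.log (lam i) with hh
  set m := ∑ i, lam i * Real.log (lam i) ^ 2 with hm
  set S := ∑ i, lam i ^ α with hS
  set L := Real.log (2 + Real.sqrt d) with hL
  have hm0 : 0 ≤ m := Finset.sum_nonneg fun i _ => mul_nonneg (h0 i) (sq_nonneg _)
  -- per-term Taylor bound
  have h_term : ∀ i, lam i ^ α ≤ lam i + t * (lam i * Real.log (lam i))
      + t ^ 2 / 2 * (lam i * Real.log (lam i) ^ 2) := by
    intro i
    rcases eq_or_lt_of_le (h0 i) with hz | hx
    · rw [← hz, Real.zero_rpow (ne_of_gt (by linarith : (0:ℝ) < α))]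
      simp
    · have hlx : Real.log (lam i) ≤ 0 := Real.log_nonpos (h0 i) (hle1 i)
      have hu : t * Real.log (lam i) ≤ 0 := mul_nonpos_iff.mpr (Or.inl ⟨ht.le, hlx⟩)
      have hexp : Real.exp (t * Real.log (lam i)) ≤
          1 + t * Real.log (lam i) + (t * Real.log (lam i)) ^ 2 / 2 :=
        exp_le_quad_of_nonpos hu
      have hrw : lam i ^ α = lam i * Real.exp (t * Real.log (lam i)) := by
        rw [Real.rpow_def_of_pos hx, show Real.log (lam i) * α
            = Real.log (lam i) + t * Real.log (lam i) by rw [htdef]; ring,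
          Real.exp_add, Real.exp_log hx]
      rw [hrw]
      nlinarith [mul_le_mul_of_nonneg_left hexp (h0 i)]
  have hS_le : S ≤ 1 + t * h + t ^ 2 / 2 * m := by
    calc S ≤ ∑ i, (lam i + t * (lam i * Real.log (lam i))
        + t ^ 2 / 2 * (lam i * Real.log (lam i) ^ 2)) :=
          Finset.sum_le_sum fun i _ => h_term i
      _ = (∑ i, lam i) + t * h + t ^ 2 / 2 * m := by
          rw [Finset.sum_add_distrib, Finset.sum_add_distrib, ← Finset.mul_sum, ← Finset.mul_sum]
      _ = 1 + t * h + t ^ 2 / 2 * m := by rw [hs]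
  have hS_pos : 0 < S := by
    have hex : ∃ i, 0 < lam i := by
      by_contra hc
      push_neg at hc
      have : ∑ i, lam i ≤ 0 := Finset.sum_nonpos fun i _ => hc i
      linarith
    obtain ⟨i, hi⟩ := hex
    exact Finset.sum_pos' (fun j _ => Real.rpow_nonneg (h0 j) α)
      ⟨i, Finset.mem_univ i, Real.rpow_pos_of_pos hi α⟩
  have hlogS : Real.log S ≤ t * h + t ^ 2 / 2 * m := by
    have := Real.log_le_sub_one_of_pos hS_pos
    linarith
  -- m bound
  have hmL : m ≤ 9 * L ^ 2 := m_le hd lam h0 hs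
  -- numeric facts
  have hc : 0 < Real.log 2 := Real.log_pos (by norm_num)
  have hc9 : Real.log 2 < 0.6931471808 := Real.log_two_lt_d9
  -- rewrite logb
  simp only [Real.logb, ← hL]
  rw [ge_iff_le, show (1:ℝ) - α = -t by rw [htdef]; ring]
  have hsum_div : (∑ i, lam i * (Real.log (lam i) / Real.log 2)) = h / Real.log 2 := by
    rw [hh, Finset.sum_div]
    exact Finset.sum_congr rfl fun i _ => by ring
  rw [hsum_div]
  have hgoal1 : 1 / (-t) * (Real.log S / Real.log 2) = -Real.log S / (t * Real.log 2) := by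
    field_simp
  rw [hgoal1]
  have hstep : -(h / Real.log 2) - t * (m / (2 * Real.log 2))
      ≤ -Real.log S / (t * Real.log 2) := by
    have e1 : -(h / Real.log 2) - t * (m / (2 * Real.log 2))
        = (-(t * h + t ^ 2 / 2 * m)) / (t * Real.log 2) := by
      field_simp; ring
    rw [e1, div_le_div_iff₀ (by positivity) (by positivity)]
    nlinarith [mul_nonneg (mul_pos ht hc).le (sub_nonneg.mpr hlogS)]
  refine le_trans ?_ hstep
  have hfinal : t * (m / (2 * Real.log 2)) ≤ 4 * t * (L / Real.log 2) ^ 2 := by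
    have hkey : m / (2 * Real.log 2) ≤ (4 * L ^ 2) / Real.log 2 ^ 2 := by
      rw [div_le_div_iff₀ (by positivity) (by positivity)]
      nlinarith [mul_le_mul_of_nonneg_right hmL (sq_nonneg (Real.log 2)),
        mul_nonneg (mul_nonneg (sq_nonneg L) hc.le)
          (by nlinarith : (0:ℝ) ≤ 8 - 9 * Real.log 2)]
    calc t * (m / (2 * Real.log 2)) ≤ t * ((4 * L ^ 2) / Real.log 2 ^ 2) :=
          mul_le_mul_of_nonneg_left hkey ht.le
      _ = 4 * t * (L / Real.log 2) ^ 2 := by ring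
  linarith [hfinal]

end RenyiAux

/-- For a density matrix ρ on a d-dimensional space, ν = 2 + √d, and
1 < α < 1 + (log 3)/(4 log ν) (logs base 2), the Rényi α-entropy satisfies
`H_α(ρ) ≥ H(ρ) − 4(α−1)(log ν)²`. -/
theorem renyi_ge_vonNeumann_of_alpha_close_to_one
    {d : ℕ} (ρ : Matrix (Fin d) (Fin d) ℂ)
    (hρ : ρ.PosSemidef) (hρ1 : ρ.trace = 1) (α : ℝ)
    (hα1 : 1 < α)
    (hα2 : α < 1 + Real.logb 2 3 / (4 * Real.logb 2 (2 + Real.sqrt d))) :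
    (1 / (1 - α)) * Real.logb 2 (∑ i, hρ.isHermitian.eigenvalues i ^ α)
    ≥ (- ∑ i, hρ.isHermitian.eigenvalues i * Real.logb 2 (hρ.isHermitian.eigenvalues i))
        - 4 * (α - 1) * (Real.logb 2 (2 + Real.sqrt d)) ^ 2 := by
  rcases Nat.eq_zero_or_pos d with hd0 | hd
  · subst hd0
    exact absurd hρ1 (by simp [Matrix.trace])
  · have hnn : ∀ i, 0 ≤ hρ.isHermitian.eigenvalues i := fun i => hρ.eigenvalues_nonneg i
    have hsumC := trace_eq_sum_eig ρ hρ.isHermitian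
    rw [hρ1] at hsumC
    have hsum : ∑ i, hρ.isHermitian.eigenvalues i = 1 := by
      have hcast : ((∑ i, hρ.isHermitian.eigenvalues i : ℝ) : ℂ) = 1 := by
        push_cast
        exact hsumC.symm
      exact_mod_cast hcast
    exact main_aux hd _ hnn hsum hα1

end
end

section
/- Let ρ be a density matrix on a d-dimensional complex Hilbert space with d ≥ 2, and let α satisfy 1 < α < 1 + (log 3)/(16 log d). Then H_α(ρ) ≥ H(ρ) − 16(α−1)(log d)². -/
open scoped BigOperators ComplexOrder

noncomputable section

/-- For `t ≥ 0`, `exp (−t) ≤ 1 − t + t²/2`. -/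
lemma exp_neg_le_quad {t : ℝ} (ht : 0 ≤ t) : Real.exp (-t) ≤ 1 - t + t ^ 2 / 2 := by
  rcases le_or_gt t 1 with h1 | h1
  · have habs : |(-t)| ≤ 1 := by rw [abs_neg, abs_of_nonneg ht]; exact h1
    have hb := Real.exp_bound habs (n := 4) (by norm_num)
    have hsum : (∑ i ∈ Finset.range 4, (-t) ^ i / (Nat.factorial i : ℝ))
        = 1 - t + t ^ 2 / 2 - t ^ 3 / 6 := by
      simp [Finset.sum_range_succ, Nat.factorial]
      ring
    rw [hsum] at hb
    have habs4 : |(-t)| ^ 4 = t ^ 4 := by rw [abs_neg, abs_of_nonneg ht]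
    have hb' : Real.exp (-t) - (1 - t + t ^ 2 / 2 - t ^ 3 / 6) ≤ t ^ 4 * (5 / 96) := by
      have := abs_le.mp hb
      calc Real.exp (-t) - (1 - t + t ^ 2 / 2 - t ^ 3 / 6)
          ≤ |(-t)| ^ 4 * ((4 : ℕ).succ / ((Nat.factorial 4 : ℝ) * 4)) := this.2
        _ = t ^ 4 * (5 / 96) := by rw [habs4]; norm_num [Nat.factorial]
    nlinarith [pow_le_pow_left₀ ht h1 3, pow_le_pow_left₀ ht h1 4, pow_nonneg ht 3,
      pow_nonneg ht 4]
  · have h2 : Real.exp (-t) ≤ Real.exp (-1) := Real.exp_le_exp.mpr (by linarith)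
    have he : (2:ℝ) ≤ Real.exp 1 := by nlinarith [Real.add_one_le_exp 1]
    have h3 : Real.exp (-1) ≤ 1 / 2 := by
      rw [Real.exp_neg, inv_eq_one_div]
      exact one_div_le_one_div_of_le (by norm_num) he
    nlinarith

/-- For `0 < u ≤ 1`, `u (ln u)² ≤ 4/e²`. -/
lemma ulog_sq_le {u : ℝ} (h0 : 0 < u) (h1 : u ≤ 1) :
    u * (Real.log u) ^ 2 ≤ 4 / Real.exp 1 ^ 2 := by
  have hs : 0 < Real.sqrt u := Real.sqrt_pos.mpr h0
  have hlog : Real.log u = 2 * Real.log (Real.sqrt u) := by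
    rw [Real.log_sqrt h0.le]; ring
  have hneg : Real.log (Real.sqrt u) ≤ 0 :=
    Real.log_nonpos (Real.sqrt_nonneg u) (Real.sqrt_le_one.mpr h1)
  have hkey : -Real.log (Real.sqrt u) ≤ 1 / (Real.sqrt u * Real.exp 1) := by
    have hinv : (Real.sqrt u)⁻¹ = 1 / (Real.sqrt u * Real.exp 1) * Real.exp 1 := by
      field_simp
    rw [← Real.log_inv, hinv, Real.log_mul (by positivity) (Real.exp_ne_zero 1), Real.log_exp]
    have hlb2 := Real.log_le_sub_one_of_pos (x := 1 / (Real.sqrt u * Real.exp 1)) (by positivity)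
    linarith
  have hsq : Real.sqrt u * Real.sqrt u = u := Real.mul_self_sqrt h0.le
  have h2 : Real.sqrt u * (-Real.log (Real.sqrt u)) ≤ 1 / Real.exp 1 := by
    have hmul : Real.sqrt u * (1 / (Real.sqrt u * Real.exp 1)) = 1 / Real.exp 1 := by
      field_simp
    calc Real.sqrt u * (-Real.log (Real.sqrt u))
        ≤ Real.sqrt u * (1 / (Real.sqrt u * Real.exp 1)) :=
          mul_le_mul_of_nonneg_left hkey hs.le
      _ = 1 / Real.exp 1 := hmul
  have h3 : 0 ≤ Real.sqrt u * (-Real.log (Real.sqrt u)) := by nlinarith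
  have h4 : (Real.sqrt u * Real.log (Real.sqrt u)) ^ 2 ≤ (1 / Real.exp 1) ^ 2 := by
    nlinarith
  have heq : u * (Real.log u) ^ 2 = 4 * (Real.sqrt u * Real.log (Real.sqrt u)) ^ 2 := by
    have h5 : Real.sqrt u ^ 2 = u := Real.sq_sqrt h0.le
    rw [hlog, mul_pow, mul_pow, h5]; ring
  rw [heq]
  calc 4 * (Real.sqrt u * Real.log (Real.sqrt u)) ^ 2 ≤ 4 * (1 / Real.exp 1) ^ 2 := by linarith
    _ = 4 / Real.exp 1 ^ 2 := by rw [div_pow]; ring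

set_option maxHeartbeats 1000000 in
/-- Core real-analytic inequality, stated with natural logarithms. -/
lemma core {d : ℕ} (hd : 2 ≤ d) (lam : Fin d → ℝ) (h0 : ∀ i, 0 ≤ lam i)
    (h1 : ∑ i, lam i = 1) {ε : ℝ} (hε : 0 < ε) :
    Real.log (∑ i, lam i ^ (1 + ε)) ≤
      ε * (∑ i, lam i * Real.log (lam i)) + 16 * ε ^ 2 * (Real.log d) ^ 2 / Real.log 2 := by
  have hd0 : (0:ℝ) < d := by positivity
  have hle1 : ∀ i, lam i ≤ 1 := by
    intro i
    calc lam i ≤ ∑ j, lam j :=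
          Finset.single_le_sum (fun j _ => h0 j) (Finset.mem_univ i)
      _ = 1 := h1
  have hex : ∃ j, 0 < lam j := by
    by_contra h
    push_neg at h
    have : ∑ i, lam i = 0 := Finset.sum_eq_zero fun i _ => le_antisymm (h i) (h0 i)
    rw [h1] at this; norm_num at this
  obtain ⟨j, hj⟩ := hex
  have hαpos : (0:ℝ) < 1 + ε := by linarith
  have hSpos : 0 < ∑ i, lam i ^ (1 + ε) := by
    apply Finset.sum_pos' (fun i _ => Real.rpow_nonneg (h0 i) _)
    exact ⟨j, Finset.mem_univ j, Real.rpow_pos_of_pos hj _⟩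
  have hpt : ∀ i, lam i ^ (1 + ε) - lam i ≤
      ε * (lam i * Real.log (lam i)) + ε ^ 2 / 2 * (lam i * (Real.log (lam i)) ^ 2) := by
    intro i
    rcases eq_or_lt_of_le (h0 i) with hz | hp
    · rw [← hz, Real.zero_rpow (ne_of_gt hαpos)]
      simp
    · have hlognp : Real.log (lam i) ≤ 0 := Real.log_nonpos hp.le (hle1 i)
      have ht : 0 ≤ -(ε * Real.log (lam i)) := by nlinarith
      have hexp := exp_neg_le_quad ht
      rw [neg_neg] at hexp
      have hrpow : lam i ^ (1 + ε) = lam i * Real.exp (ε * Real.log (lam i)) := by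
        rw [Real.rpow_def_of_pos hp]
        rw [show Real.log (lam i) * (1 + ε) = Real.log (lam i) + ε * Real.log (lam i) by ring,
          Real.exp_add, Real.exp_log hp]
      rw [hrpow]
      have := mul_le_mul_of_nonneg_left hexp hp.le
      nlinarith [this]
  have hQpt : ∀ i, lam i * (Real.log (lam i)) ^ 2 ≤
      2 * lam i * (Real.log d) ^ 2 + 8 / (d * Real.exp 1 ^ 2) := by
    intro i
    have hlogd : 0 < Real.log d := Real.log_pos (by exact_mod_cast hd)
    rcases eq_or_lt_of_le (h0 i) with hz | hp
    · rw [← hz]; simp; positivity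
    · rcases le_or_gt (1 / (d:ℝ)) (lam i) with hcase | hcase
      · have hlb : -Real.log d ≤ Real.log (lam i) := by
          rw [← Real.log_inv, inv_eq_one_div]
          exact Real.log_le_log (by positivity) hcase
        have hub : Real.log (lam i) ≤ 0 := Real.log_nonpos hp.le (hle1 i)
        have hsq : (Real.log (lam i)) ^ 2 ≤ (Real.log d) ^ 2 := by nlinarith
        have h8 : 0 ≤ 8 / ((d:ℝ) * Real.exp 1 ^ 2) := by positivity
        nlinarith [h0 i, sq_nonneg (Real.log d)]
      · set u := (d:ℝ) * lam i with hu
        have hu0 : 0 < u := by positivity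
        have hu1 : u ≤ 1 := by
          rw [hu]
          calc (d:ℝ) * lam i ≤ (d:ℝ) * (1 / d) := by nlinarith
            _ = 1 := by field_simp
        have hulog := ulog_sq_le hu0 hu1
        have hlam : lam i = u / d := by rw [hu]; field_simp
        have hlogeq : Real.log (lam i) = Real.log u - Real.log d := by
          rw [hlam, Real.log_div (ne_of_gt hu0) (ne_of_gt hd0)]
        rw [hlogeq, hlam]
        have hlu : Real.log u ≤ 0 := Real.log_nonpos hu0.le hu1
        have hexpand : u / d * (Real.log u - Real.log d) ^ 2 ≤
            u / d * (2 * (Real.log u) ^ 2 + 2 * (Real.log d) ^ 2) := by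
          apply mul_le_mul_of_nonneg_left _ (by positivity)
          nlinarith [sq_nonneg (Real.log u + Real.log d)]
        have h2 : u / d * (2 * (Real.log u) ^ 2 + 2 * (Real.log d) ^ 2)
            = 2 / d * (u * (Real.log u) ^ 2) + 2 * (u / d) * (Real.log d) ^ 2 := by ring
        have h3 : 2 / (d:ℝ) * (u * (Real.log u) ^ 2) ≤ 2 / d * (4 / Real.exp 1 ^ 2) :=
          mul_le_mul_of_nonneg_left hulog (by positivity)
        have h4 : 2 / (d:ℝ) * (4 / Real.exp 1 ^ 2) = 8 / (d * Real.exp 1 ^ 2) := by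
          field_simp; ring
        nlinarith [hexpand]
  have hQ : ∑ i, lam i * (Real.log (lam i)) ^ 2 ≤ 2 * (Real.log d) ^ 2 + 8 / Real.exp 1 ^ 2 := by
    calc ∑ i, lam i * (Real.log (lam i)) ^ 2
        ≤ ∑ i, (2 * lam i * (Real.log d) ^ 2 + 8 / (d * Real.exp 1 ^ 2)) :=
          Finset.sum_le_sum fun i _ => hQpt i
      _ = 2 * (Real.log d) ^ 2 * (∑ i, lam i) + (d : ℝ) * (8 / (d * Real.exp 1 ^ 2)) := by
          rw [Finset.sum_add_distrib, Finset.sum_const, Finset.card_univ, Fintype.card_fin,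
            nsmul_eq_mul,
            show (∑ x, 2 * lam x * Real.log d ^ 2) = 2 * Real.log d ^ 2 * ∑ x, lam x from by
              rw [Finset.mul_sum]; exact Finset.sum_congr rfl fun i _ => by ring]
      _ = 2 * (Real.log d) ^ 2 + 8 / Real.exp 1 ^ 2 := by
          rw [h1]; field_simp
  have hQnum : 2 * (Real.log d) ^ 2 + 8 / Real.exp 1 ^ 2 ≤ 32 * (Real.log d) ^ 2 / Real.log 2 := by
    have hld : Real.log 2 ≤ Real.log d := Real.log_le_log (by norm_num) (by exact_mod_cast hd)
    have hl2a : (0.6931471803 : ℝ) < Real.log 2 := Real.log_two_gt_d9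
    have hl2b : Real.log 2 < 0.6931471808 := Real.log_two_lt_d9
    have hea : (2.7182818283 : ℝ) < Real.exp 1 := Real.exp_one_gt_d9
    have h8 : 8 / Real.exp 1 ^ 2 ≤ 1.1 := by
      rw [div_le_iff₀ (by positivity)]
      nlinarith
    have hsq : (Real.log 2) ^ 2 ≤ (Real.log d) ^ 2 := by nlinarith
    have hL2 : (0.48 : ℝ) ≤ (Real.log d) ^ 2 := by nlinarith
    have hstep : (46:ℝ) * (Real.log d) ^ 2 ≤ 32 * (Real.log d) ^ 2 / Real.log 2 := by
      rw [le_div_iff₀ (by linarith : (0:ℝ) < Real.log 2)]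
      nlinarith [sq_nonneg (Real.log d)]
    nlinarith
  have hsum : (∑ i, lam i ^ (1 + ε)) - 1 ≤
      ε * (∑ i, lam i * Real.log (lam i)) +
        ε ^ 2 / 2 * (∑ i, lam i * (Real.log (lam i)) ^ 2) := by
    have := Finset.sum_le_sum fun i (_ : i ∈ Finset.univ) => hpt i
    rw [Finset.sum_sub_distrib, h1, Finset.sum_add_distrib, ← Finset.mul_sum, ← Finset.mul_sum]
      at this
    exact this
  have hlogS := Real.log_le_sub_one_of_pos hSpos
  have hfin : ε ^ 2 / 2 * (∑ i, lam i * (Real.log (lam i)) ^ 2) ≤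
      16 * ε ^ 2 * (Real.log d) ^ 2 / Real.log 2 := by
    have := mul_le_mul_of_nonneg_left (hQ.trans hQnum) (by positivity : (0:ℝ) ≤ ε ^ 2 / 2)
    calc ε ^ 2 / 2 * (∑ i, lam i * (Real.log (lam i)) ^ 2)
        ≤ ε ^ 2 / 2 * (32 * (Real.log d) ^ 2 / Real.log 2) := this
      _ = 16 * ε ^ 2 * (Real.log d) ^ 2 / Real.log 2 := by ring
  linarith

/-- For a density matrix ρ on a d-dimensional space with d ≥ 2 and
1 < α < 1 + (log 3)/(16 log d) (logs base 2), the Rényi α-entropy satisfies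
`H_α(ρ) ≥ H(ρ) − 16(α−1)(log d)²`. -/
theorem renyi_ge_vonNeumann_of_alpha_close_to_one_simplified
    {d : ℕ} (hd : 2 ≤ d) (ρ : Matrix (Fin d) (Fin d) ℂ)
    (hρ : ρ.PosSemidef) (hρ1 : ρ.trace = 1) (α : ℝ)
    (hα1 : 1 < α)
    (hα2 : α < 1 + Real.logb 2 3 / (16 * Real.logb 2 d)) :
    (1 / (1 - α)) * Real.logb 2 (∑ i, hρ.isHermitian.eigenvalues i ^ α)
    ≥ (- ∑ i, hρ.isHermitian.eigenvalues i * Real.logb 2 (hρ.isHermitian.eigenvalues i))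
        - 16 * (α - 1) * (Real.logb 2 d) ^ 2 := by
  set lam := hρ.isHermitian.eigenvalues with hlam
  have h0 : ∀ i, 0 ≤ lam i := fun i => hρ.eigenvalues_nonneg i
  have htr : ρ.trace = ∑ i, (lam i : ℂ) := by
    conv_lhs => rw [hρ.isHermitian.spectral_theorem]
    rw [Unitary.conjStarAlgAut_apply, Matrix.trace_mul_cycle, Unitary.coe_star_mul_self, Matrix.one_mul,
      Matrix.trace_diagonal]
    rfl
  have h1 : ∑ i, lam i = 1 := by
    have : ((∑ i, lam i : ℝ) : ℂ) = 1 := by push_cast; rw [← htr, hρ1]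
    exact_mod_cast this
  have hε : (0:ℝ) < α - 1 := by linarith
  have key := core hd lam h0 h1 hε
  rw [show (1:ℝ) + (α - 1) = α by ring] at key
  have hl2 : (0:ℝ) < Real.log 2 := Real.log_pos (by norm_num)
  set S := ∑ i, lam i ^ α with hS
  set T := ∑ i, lam i * Real.log (lam i) with hT
  set L := Real.log d with hL
  simp only [Real.logb]
  have hsum2 : ∑ i, lam i * (Real.log (lam i) / Real.log 2) = T / Real.log 2 := by
    rw [hT, Finset.sum_div]
    exact Finset.sum_congr rfl fun i _ => by ring
  rw [hsum2]
  have heq : (1 / (1 - α)) * (Real.log S / Real.log 2)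
      = -Real.log S / ((α - 1) * Real.log 2) := by
    rw [div_mul_div_comm, one_mul]
    have hne1 : ((1 - α) * Real.log 2) ≠ 0 :=
      ne_of_lt (mul_neg_of_neg_of_pos (by linarith) hl2)
    have hne2 : ((α - 1) * Real.log 2) ≠ 0 := by positivity
    rw [div_eq_div_iff hne1 hne2]
    ring
  rw [heq, ge_iff_le, le_div_iff₀ (by positivity : (0:ℝ) < (α - 1) * Real.log 2)]
  have hexpand : (-(T / Real.log 2) - 16 * (α - 1) * (L / Real.log 2) ^ 2) *
      ((α - 1) * Real.log 2) = -((α - 1) * T + 16 * (α - 1) ^ 2 * L ^ 2 / Real.log 2) := by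
    field_simp
    ring
  rw [hexpand]
  linarith

end
end

section
/- Let (ρ¹_i)_{i∈I₁} be density matrices on a finite-dimensional complex Hilbert space E₁ and (ρ²_i)_{i∈I₂} density matrices on a finite-dimensional complex Hilbert space E₂, with I₁, I₂ finite sets. Then for every joint probability distribution p on I₁ × I₂ with marginals p₁ on I₁ and p₂ on I₂: S_acc({p_{(i₁,i₂)}, ρ¹_{i₁} ⊗ ρ²_{i₂}}) ≤ S_acc({p₁, ρ¹}) + S_acc({p₂, ρ²}), where ⊗ denotes the Kronecker (tensor) product. -/
open scoped BigOperators ComplexOrder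

noncomputable section

/-- A probability distribution on a finite type. -/
def IsProbDist {I : Type*} [Fintype I] (p : I → ℝ) : Prop :=
  (∀ i, 0 ≤ p i) ∧ ∑ i, p i = 1

/-- Shannon entropy (base 2), with the convention 0·log 0 = 0 (automatic since
`Real.logb 2 0 = 0`). -/
def shannonEntropy {I : Type*} [Fintype I] (p : I → ℝ) : ℝ :=
  - ∑ i, p i * Real.logb 2 (p i)

/-- A density matrix: positive semidefinite with trace 1. -/
def IsDensityMatrix {n : Type*} [Fintype n] (ρ : Matrix n n ℂ) : Prop :=
  ρ.PosSemidef ∧ ρ.trace = 1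

/-- A POVM: positive semidefinite elements summing to the identity. -/
def IsPOVM {n J : Type*} [Fintype n] [DecidableEq n] [Fintype J]
    (Q : J → Matrix n n ℂ) : Prop :=
  (∀ j, (Q j).PosSemidef) ∧ ∑ j, Q j = 1

/-- Conditional Shannon entropy `H(A|B)_P = H(P) − H(P_B)` of a joint distribution
on `A × B`, where `P_B` is the marginal on `B`. -/
def condEntropy {A B : Type*} [Fintype A] [Fintype B] (P : A × B → ℝ) : ℝ :=
  shannonEntropy P - shannonEntropy (fun b => ∑ a, P (a, b))

open Kronecker

/-- A POVM on the space with index type `n`, with an arbitrary finite outcome set. -/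
structure POVM (n : Type) [Fintype n] [DecidableEq n] where
  ι : Type
  [fin : Fintype ι]
  elem : ι → Matrix n n ℂ
  psd : ∀ j, (elem j).PosSemidef
  sum_eq_one : ∑ j, elem j = 1

attribute [instance] POVM.fin

/-- The accessible equivocation `S_acc({p_i, ρ_i})`: the infimum over all POVMs `Q`
(with arbitrary finite outcome sets) of the conditional Shannon entropy `H(I|J)` of the
joint distribution `P(i,j) = p_i·tr(ρ_i Q_j)`. -/
def Sacc {n : Type} [Fintype n] [DecidableEq n] {I : Type} [Fintype I]
    (p : I → ℝ) (ρ : I → Matrix n n ℂ) : ℝ :=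
  sInf { h : ℝ | ∃ Q : POVM n,
    h = condEntropy (fun x : I × Q.ι => p x.1 * ((ρ x.1 * Q.elem x.2).trace).re) }

/-! ### Auxiliary matrix lemmas -/

open Matrix in
lemma aux_kron_conjT {m n p q : Type*} (A : Matrix m n ℂ) (B : Matrix p q ℂ) :
    (A ⊗ₖ B)ᴴ = Aᴴ ⊗ₖ Bᴴ := by
  ext x y
  obtain ⟨i, j⟩ := x
  obtain ⟨k, l⟩ := y
  simp [Matrix.conjTranspose_apply]

open scoped MatrixOrder in
lemma aux_psd_eq_conjT_mul_self {m : Type*} [Fintype m] {A : Matrix m m ℂ} (hA : A.PosSemidef) :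
    ∃ C : Matrix m m ℂ, A = Matrix.conjTranspose C * C := by
  classical exact CStarAlgebra.nonneg_iff_eq_star_mul_self.mp hA.nonneg

lemma aux_kron_psd {m p : Type*} [Fintype m] [Fintype p] {A : Matrix m m ℂ}
    {B : Matrix p p ℂ} (hA : A.PosSemidef) (hB : B.PosSemidef) : (A ⊗ₖ B).PosSemidef := by
  obtain ⟨C, rfl⟩ := aux_psd_eq_conjT_mul_self hA
  obtain ⟨D, rfl⟩ := aux_psd_eq_conjT_mul_self hB
  rw [Matrix.mul_kronecker_mul, ← aux_kron_conjT]
  exact Matrix.posSemidef_conjTranspose_mul_self _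

lemma aux_psd_trace_nonneg {m : Type*} [Fintype m] [DecidableEq m] {A : Matrix m m ℂ}
    (hA : A.PosSemidef) : 0 ≤ A.trace := by
  rw [Matrix.trace]
  apply Finset.sum_nonneg
  intro i _
  have h := hA.diag_nonneg (i := i)
  simpa [dotProduct, Matrix.mulVec, Pi.single_apply, Finset.sum_ite_eq] using h

open Matrix in
lemma aux_trace_mul_psd_nonneg {m : Type*} [Fintype m] [DecidableEq m] {A B : Matrix m m ℂ}
    (hA : A.PosSemidef) (hB : B.PosSemidef) : 0 ≤ (A * B).trace := by
  obtain ⟨C, rfl⟩ := aux_psd_eq_conjT_mul_self hA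
  rw [Matrix.mul_assoc, Matrix.trace_mul_comm]
  exact aux_psd_trace_nonneg (hB.mul_mul_conjTranspose_same C)

lemma aux_trace_re_nonneg {m : Type*} [Fintype m] [DecidableEq m] {A B : Matrix m m ℂ}
    (hA : A.PosSemidef) (hB : B.PosSemidef) : 0 ≤ ((A * B).trace).re :=
  (Complex.le_def.mp (aux_trace_mul_psd_nonneg hA hB)).1

lemma aux_trace_im_zero {m : Type*} [Fintype m] [DecidableEq m] {A B : Matrix m m ℂ}
    (hA : A.PosSemidef) (hB : B.PosSemidef) : ((A * B).trace).im = 0 :=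
  ((Complex.le_def.mp (aux_trace_mul_psd_nonneg hA hB)).2).symm

/-! ### Auxiliary entropy lemmas -/

lemma aux_sum_marg {A B : Type*} [Fintype A] [Fintype B] (P : A × B → ℝ) (f : B → ℝ) :
    ∑ b, (∑ a, P (a, b)) * f b = ∑ x : A × B, P x * f x.2 := by
  rw [Fintype.sum_prod_type_right]
  simp [Finset.sum_mul]

/-- Conditional entropy as a self-cross-entropy. -/
lemma aux_condEntropy_eq_cross {A B : Type*} [Fintype A] [Fintype B] (P : A × B → ℝ)
    (hP : ∀ x, 0 ≤ P x) :
    condEntropy P = - ∑ x, P x * Real.logb 2 (P x / ∑ a, P (a, x.2)) := by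
  have key : ∀ x : A × B, P x * Real.logb 2 (P x / ∑ a, P (a, x.2))
      = P x * Real.logb 2 (P x) - P x * Real.logb 2 (∑ a, P (a, x.2)) := by
    intro x
    rcases eq_or_lt_of_le (hP x) with h | h
    · simp [← h]
    · have hPB : (0:ℝ) < ∑ a, P (a, x.2) :=
        lt_of_lt_of_le h (Finset.single_le_sum (f := fun a => P (a, x.2))
          (fun a _ => hP _) (Finset.mem_univ x.1))
      rw [Real.logb_div (ne_of_gt h) (ne_of_gt hPB), mul_sub]
  simp only [condEntropy, shannonEntropy, key, Finset.sum_sub_distrib]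
  rw [aux_sum_marg P (fun b => Real.logb 2 (∑ a, P (a, b)))]
  ring

lemma aux_condEntropy_nonneg {A B : Type*} [Fintype A] [Fintype B] (P : A × B → ℝ)
    (hP : ∀ x, 0 ≤ P x) : 0 ≤ condEntropy P := by
  rw [aux_condEntropy_eq_cross P hP, neg_nonneg]
  apply Finset.sum_nonpos
  intro x _
  rcases eq_or_lt_of_le (hP x) with h | h
  · simp [← h]
  · apply mul_nonpos_of_nonneg_of_nonpos (le_of_lt h)
    apply Real.logb_nonpos one_lt_two (div_nonneg (hP x) (Finset.sum_nonneg fun a _ => hP _))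
    apply div_le_one_of_le₀
    · exact Finset.single_le_sum (f := fun a => P (a, x.2)) (fun a _ => hP _) (Finset.mem_univ x.1)
    · exact Finset.sum_nonneg fun a _ => hP _

/-- Gibbs-type inequality: the conditional entropy is bounded by the cross entropy with
any sub-normalized conditional kernel `r`. -/
lemma aux_condEntropy_le_cross {A B : Type*} [Fintype A] [Fintype B]
    (P r : A × B → ℝ) (hP : ∀ x, 0 ≤ P x)
    (hr : ∀ x, 0 ≤ r x) (hrs : ∀ b, ∑ a, r (a, b) ≤ 1)
    (hpos : ∀ x, 0 < P x → 0 < r x) :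
    condEntropy P ≤ - ∑ x, P x * Real.logb 2 (r x) := by
  have hlog2 : (0:ℝ) < Real.log 2 := Real.log_pos one_lt_two
  have hPB : ∀ b : B, (0:ℝ) ≤ ∑ a, P (a, b) := fun b => Finset.sum_nonneg fun a _ => hP _
  rw [aux_condEntropy_eq_cross P hP]
  have main : ∑ x : A × B, (P x * Real.logb 2 (r x) - P x * Real.logb 2 (P x / ∑ a, P (a, x.2)))
      ≤ 0 := by
    have step : ∀ x : A × B,
        P x * Real.logb 2 (r x) - P x * Real.logb 2 (P x / ∑ a, P (a, x.2))
        ≤ (r x * (∑ a, P (a, x.2)) - P x) / Real.log 2 := by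
      intro x
      rcases eq_or_lt_of_le (hP x) with h | h
      · rw [← h]
        simp only [zero_mul, sub_zero, zero_sub, neg_zero]
        exact div_nonneg (mul_nonneg (hr x) (hPB x.2)) (le_of_lt hlog2)
      · have hrx := hpos x h
        have hPBx : (0:ℝ) < ∑ a, P (a, x.2) :=
          lt_of_lt_of_le h (Finset.single_le_sum (f := fun a => P (a, x.2))
            (fun a _ => hP _) (Finset.mem_univ x.1))
        set t : ℝ := r x * (∑ a, P (a, x.2)) / P x with ht
        have htpos : 0 < t := by positivity
        have hlogt : Real.logb 2 (r x) - Real.logb 2 (P x / ∑ a, P (a, x.2))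
            = Real.logb 2 t := by
          rw [ht, Real.logb_div (ne_of_gt (mul_pos hrx hPBx)) (ne_of_gt h),
            Real.logb_mul (ne_of_gt hrx) (ne_of_gt hPBx),
            Real.logb_div (ne_of_gt h) (ne_of_gt hPBx)]
          ring
        have hle := Real.log_le_sub_one_of_pos htpos
        have htP : t * P x = r x * (∑ a, P (a, x.2)) := by
          rw [ht]; field_simp
        rw [← mul_sub, hlogt, Real.logb, ← mul_div_assoc, div_le_div_iff_of_pos_right hlog2]
        calc P x * Real.log t ≤ P x * (t - 1) := mul_le_mul_of_nonneg_left hle (hP x)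
          _ = r x * (∑ a, P (a, x.2)) - P x := by
              rw [mul_sub, mul_one, mul_comm (P x) t, htP]
    calc ∑ x : A × B, (P x * Real.logb 2 (r x) - P x * Real.logb 2 (P x / ∑ a, P (a, x.2)))
        ≤ ∑ x : A × B, (r x * (∑ a, P (a, x.2)) - P x) / Real.log 2 :=
          Finset.sum_le_sum fun x _ => step x
      _ = ((∑ x : A × B, r x * (∑ a, P (a, x.2))) - ∑ x : A × B, P x) / Real.log 2 := by
          rw [← Finset.sum_div, Finset.sum_sub_distrib]
      _ ≤ 0 := by
          apply div_nonpos_of_nonpos_of_nonneg _ (le_of_lt hlog2)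
          rw [sub_nonpos, ← aux_sum_marg r (fun b => ∑ a, P (a, b))]
          calc ∑ b, (∑ a, r (a, b)) * (∑ a, P (a, b))
              ≤ ∑ b, 1 * (∑ a, P (a, b)) :=
                Finset.sum_le_sum fun b _ => mul_le_mul_of_nonneg_right (hrs b) (hPB b)
            _ = ∑ x : A × B, P x * 1 := by simpa using aux_sum_marg P (fun _ => 1)
            _ = ∑ x : A × B, P x := by simp
  rw [Finset.sum_sub_distrib] at main
  linarith

lemma aux_kron_sum {m p ι κ : Type*} [Fintype ι] [Fintype κ]
    (A : ι → Matrix m m ℂ) (B : κ → Matrix p p ℂ) :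
    ∑ j : ι × κ, A j.1 ⊗ₖ B j.2 = (∑ i, A i) ⊗ₖ (∑ k, B k) := by
  ext x y
  obtain ⟨i, k⟩ := x
  obtain ⟨j, l⟩ := y
  simp only [Matrix.sum_apply, Fintype.sum_prod_type, Matrix.kroneckerMap_apply,
    Finset.sum_mul, Finset.mul_sum]
  exact Finset.sum_comm

lemma aux_pos_factors {a b : ℝ} (ha : 0 ≤ a) (h : 0 < a * b) : 0 < a ∧ 0 < b := by
  rcases mul_pos_iff.mp h with ⟨h1, h2⟩ | ⟨h1, h2⟩
  · exact ⟨h1, h2⟩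
  · linarith

lemma aux_sum_div_le_one {I : Type*} [Fintype I] (g : I → ℝ) :
    ∑ i, g i / (∑ i, g i) ≤ 1 := by
  rw [← Finset.sum_div]
  rcases eq_or_ne (∑ i, g i) 0 with h | h
  · simp [h]
  · rw [div_self h]

/-- subadditivity of the accessible equivocation: for any joint prior `p`
on `I₁ × I₂`, the accessible equivocation of the product family is at most the sum of the
accessible equivocations of the marginal ensembles. -/
theorem sacc_subadditive
    {D₁ D₂ : ℕ} {I₁ I₂ : Type} [Fintype I₁] [Fintype I₂]
    (ρ₁ : I₁ → Matrix (Fin D₁) (Fin D₁) ℂ) (hρ₁ : ∀ i, IsDensityMatrix (ρ₁ i))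
    (ρ₂ : I₂ → Matrix (Fin D₂) (Fin D₂) ℂ) (hρ₂ : ∀ i, IsDensityMatrix (ρ₂ i))
    (p : I₁ × I₂ → ℝ) (hp : IsProbDist p) :
    Sacc p (fun i : I₁ × I₂ => ρ₁ i.1 ⊗ₖ ρ₂ i.2)
    ≤ Sacc (fun i₁ => ∑ i₂, p (i₁, i₂)) ρ₁ + Sacc (fun i₂ => ∑ i₁, p (i₁, i₂)) ρ₂ := by
  obtain ⟨hp0, hp1⟩ := hp
  -- marginal priors
  set p₁ : I₁ → ℝ := fun i₁ => ∑ i₂, p (i₁, i₂) with hp₁def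
  set p₂ : I₂ → ℝ := fun i₂ => ∑ i₁, p (i₁, i₂) with hp₂def
  have hp₁0 : ∀ i₁, 0 ≤ p₁ i₁ := fun i₁ => Finset.sum_nonneg fun i₂ _ => hp0 _
  have hp₂0 : ∀ i₂, 0 ≤ p₂ i₂ := fun i₂ => Finset.sum_nonneg fun i₁ _ => hp0 _
  -- the three sets
  set SS : Set ℝ := { h : ℝ | ∃ Q : POVM (Fin D₁ × Fin D₂),
    h = condEntropy (fun x : (I₁ × I₂) × Q.ι =>
      p x.1 * ((((fun i : I₁ × I₂ => ρ₁ i.1 ⊗ₖ ρ₂ i.2) x.1) * Q.elem x.2).trace).re) }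
    with hSS
  set SA : Set ℝ := { h : ℝ | ∃ Q : POVM (Fin D₁),
    h = condEntropy (fun x : I₁ × Q.ι => p₁ x.1 * ((ρ₁ x.1 * Q.elem x.2).trace).re) } with hSA
  set SB : Set ℝ := { h : ℝ | ∃ Q : POVM (Fin D₂),
    h = condEntropy (fun x : I₂ × Q.ι => p₂ x.1 * ((ρ₂ x.1 * Q.elem x.2).trace).re) } with hSB
  have hSSbdd : BddBelow SS := by
    refine ⟨0, fun h hh => ?_⟩
    obtain ⟨Q, rfl⟩ := hh
    exact aux_condEntropy_nonneg _ fun x =>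
      mul_nonneg (hp0 _) (aux_trace_re_nonneg (aux_kron_psd (hρ₁ _).1 (hρ₂ _).1) (Q.psd _))
  have hSAne : SA.Nonempty := by
    refine ⟨_, ⟨⟨Unit, fun _ => 1, fun _ => Matrix.PosSemidef.one, by simp⟩, rfl⟩⟩
  have hSBne : SB.Nonempty := by
    refine ⟨_, ⟨⟨Unit, fun _ => 1, fun _ => Matrix.PosSemidef.one, by simp⟩, rfl⟩⟩
  -- main step: for any two POVMs, sInf SS is below the sum of the induced equivocations
  have key : ∀ a ∈ SA, ∀ b ∈ SB, sInf SS ≤ a + b := by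
    rintro a ⟨Q₁, rfl⟩ b ⟨Q₂, rfl⟩
    -- conditional outcome probabilities
    set q₁ : I₁ × Q₁.ι → ℝ := fun y => ((ρ₁ y.1 * Q₁.elem y.2).trace).re with hq₁def
    set q₂ : I₂ × Q₂.ι → ℝ := fun y => ((ρ₂ y.1 * Q₂.elem y.2).trace).re with hq₂def
    have hq₁0 : ∀ y, 0 ≤ q₁ y := fun y => aux_trace_re_nonneg (hρ₁ _).1 (Q₁.psd _)
    have hq₂0 : ∀ y, 0 ≤ q₂ y := fun y => aux_trace_re_nonneg (hρ₂ _).1 (Q₂.psd _)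
    have hq₁sum : ∀ i, ∑ j, q₁ (i, j) = 1 := by
      intro i
      have : ∑ j, (ρ₁ i * Q₁.elem j).trace = 1 := by
        rw [← Matrix.trace_sum, ← Matrix.mul_sum, Q₁.sum_eq_one, Matrix.mul_one, (hρ₁ i).2]
      calc ∑ j, q₁ (i, j) = (∑ j, (ρ₁ i * Q₁.elem j).trace).re := by
            rw [Complex.re_sum]
        _ = 1 := by rw [this]; simp
    have hq₂sum : ∀ i, ∑ j, q₂ (i, j) = 1 := by
      intro i
      have : ∑ j, (ρ₂ i * Q₂.elem j).trace = 1 := by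
        rw [← Matrix.trace_sum, ← Matrix.mul_sum, Q₂.sum_eq_one, Matrix.mul_one, (hρ₂ i).2]
      calc ∑ j, q₂ (i, j) = (∑ j, (ρ₂ i * Q₂.elem j).trace).re := by
            rw [Complex.re_sum]
        _ = 1 := by rw [this]; simp
    -- the product POVM
    set Qp : POVM (Fin D₁ × Fin D₂) :=
      { ι := Q₁.ι × Q₂.ι
        elem := fun j => Q₁.elem j.1 ⊗ₖ Q₂.elem j.2
        psd := fun j => aux_kron_psd (Q₁.psd j.1) (Q₂.psd j.2)
        sum_eq_one := by
          rw [aux_kron_sum, Q₁.sum_eq_one, Q₂.sum_eq_one, Matrix.one_kronecker_one] } with hQp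
    -- the joint distributions
    set P : (I₁ × I₂) × (Q₁.ι × Q₂.ι) → ℝ := fun x =>
      p x.1 * (((ρ₁ x.1.1 ⊗ₖ ρ₂ x.1.2) * (Q₁.elem x.2.1 ⊗ₖ Q₂.elem x.2.2)).trace).re
      with hPdef
    set F₁ : I₁ × Q₁.ι → ℝ := fun y => p₁ y.1 * q₁ y with hF₁def
    set F₂ : I₂ × Q₂.ι → ℝ := fun y => p₂ y.1 * q₂ y with hF₂def
    have hP_eq : ∀ x, P x = p x.1 * q₁ (x.1.1, x.2.1) * q₂ (x.1.2, x.2.2) := by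
      intro x
      have him₁ := aux_trace_im_zero (hρ₁ x.1.1).1 (Q₁.psd x.2.1)
      have him₂ := aux_trace_im_zero (hρ₂ x.1.2).1 (Q₂.psd x.2.2)
      simp only [hPdef, hq₁def, hq₂def]
      rw [← Matrix.mul_kronecker_mul, Matrix.trace_kronecker, Complex.mul_re, him₁, him₂]
      ring
    have hP0 : ∀ x, 0 ≤ P x := by
      intro x
      rw [hP_eq x]
      exact mul_nonneg (mul_nonneg (hp0 _) (hq₁0 _)) (hq₂0 _)
    have hF₁0 : ∀ y, 0 ≤ F₁ y := fun y => mul_nonneg (hp₁0 _) (hq₁0 _)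
    have hF₂0 : ∀ y, 0 ≤ F₂ y := fun y => mul_nonneg (hp₂0 _) (hq₂0 _)
    -- marginals of P
    have hM₁ : ∀ y : I₁ × Q₁.ι, ∑ z : I₂ × Q₂.ι, P ((y.1, z.1), (y.2, z.2)) = F₁ y := by
      intro y
      rw [Fintype.sum_prod_type]
      simp only [hP_eq]
      calc ∑ i₂, ∑ j₂, p (y.1, i₂) * q₁ (y.1, y.2) * q₂ (i₂, j₂)
          = ∑ i₂, p (y.1, i₂) * q₁ (y.1, y.2) * ∑ j₂, q₂ (i₂, j₂) := by
            simp only [Finset.mul_sum]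
        _ = ∑ i₂, p (y.1, i₂) * q₁ (y.1, y.2) := by
            simp only [hq₂sum, mul_one]
        _ = F₁ y := by rw [hF₁def, ← Finset.sum_mul, hp₁def]
    have hM₂ : ∀ y : I₂ × Q₂.ι, ∑ z : I₁ × Q₁.ι, P ((z.1, y.1), (z.2, y.2)) = F₂ y := by
      intro y
      rw [Fintype.sum_prod_type]
      simp only [hP_eq]
      calc ∑ i₁, ∑ j₁, p (i₁, y.1) * q₁ (i₁, j₁) * q₂ (y.1, y.2)
          = ∑ i₁, p (i₁, y.1) * q₂ (y.1, y.2) * ∑ j₁, q₁ (i₁, j₁) := by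
            simp only [Finset.mul_sum]; congr 1; ext i₁; congr 1; ext j₁; ring
        _ = ∑ i₁, p (i₁, y.1) * q₂ (y.1, y.2) := by
            simp only [hq₁sum, mul_one]
        _ = F₂ y := by rw [hF₂def, ← Finset.sum_mul, hp₂def]
    -- the reference conditional kernels
    set r₁ : I₁ × Q₁.ι → ℝ := fun y => F₁ y / ∑ a, F₁ (a, y.2) with hr₁def
    set r₂ : I₂ × Q₂.ι → ℝ := fun y => F₂ y / ∑ a, F₂ (a, y.2) with hr₂def
    have hr₁0 : ∀ y, 0 ≤ r₁ y := fun y =>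
      div_nonneg (hF₁0 y) (Finset.sum_nonneg fun a _ => hF₁0 _)
    have hr₂0 : ∀ y, 0 ≤ r₂ y := fun y =>
      div_nonneg (hF₂0 y) (Finset.sum_nonneg fun a _ => hF₂0 _)
    -- positivity propagation
    have hfac : ∀ x : (I₁ × I₂) × (Q₁.ι × Q₂.ι), 0 < P x →
        0 < r₁ (x.1.1, x.2.1) ∧ 0 < r₂ (x.1.2, x.2.2) := by
      intro x hx
      rw [hP_eq x] at hx
      obtain ⟨hx', hq2⟩ := aux_pos_factors (mul_nonneg (hp0 _) (hq₁0 _)) hx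
      obtain ⟨hpp, hq1⟩ := aux_pos_factors (hp0 _) hx'
      have hF₁pos : 0 < F₁ (x.1.1, x.2.1) := by
        apply mul_pos _ hq1
        exact lt_of_lt_of_le hpp (Finset.single_le_sum (f := fun i₂ => p (x.1.1, i₂))
          (fun i _ => hp0 _) (Finset.mem_univ x.1.2))
      have hF₂pos : 0 < F₂ (x.1.2, x.2.2) := by
        apply mul_pos _ hq2
        exact lt_of_lt_of_le hpp (Finset.single_le_sum (f := fun i₁ => p (i₁, x.1.2))
          (fun i _ => hp0 _) (Finset.mem_univ x.1.1))
      constructor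
      · exact div_pos hF₁pos (lt_of_lt_of_le hF₁pos
          (Finset.single_le_sum (f := fun a => F₁ (a, x.2.1)) (fun a _ => hF₁0 _)
            (Finset.mem_univ x.1.1)))
      · exact div_pos hF₂pos (lt_of_lt_of_le hF₂pos
          (Finset.single_le_sum (f := fun a => F₂ (a, x.2.2)) (fun a _ => hF₂0 _)
            (Finset.mem_univ x.1.2)))
    -- Gibbs bound for the joint measurement
    have gibbs : condEntropy P ≤
        - ∑ x : (I₁ × I₂) × (Q₁.ι × Q₂.ι),
          P x * Real.logb 2 (r₁ (x.1.1, x.2.1) * r₂ (x.1.2, x.2.2)) := by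
      apply aux_condEntropy_le_cross
      · exact hP0
      · exact fun x => mul_nonneg (hr₁0 _) (hr₂0 _)
      · rintro ⟨j₁, j₂⟩
        rw [Fintype.sum_prod_type]
        calc ∑ i₁, ∑ i₂, r₁ ((i₁, i₂).1, (j₁, j₂).1) * r₂ ((i₁, i₂).2, (j₁, j₂).2)
            = (∑ i₁, r₁ (i₁, j₁)) * (∑ i₂, r₂ (i₂, j₂)) := by
              rw [Finset.sum_mul_sum]
          _ ≤ 1 * 1 := by
              apply mul_le_mul (aux_sum_div_le_one _) (aux_sum_div_le_one _)
              · exact Finset.sum_nonneg fun i _ => hr₂0 _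
              · exact zero_le_one
          _ = 1 := by ring
      · exact fun x hx => mul_pos (hfac x hx).1 (hfac x hx).2
    -- splitting of the cross entropy
    have split : ∑ x : (I₁ × I₂) × (Q₁.ι × Q₂.ι),
        P x * Real.logb 2 (r₁ (x.1.1, x.2.1) * r₂ (x.1.2, x.2.2))
        = (∑ x : (I₁ × I₂) × (Q₁.ι × Q₂.ι), P x * Real.logb 2 (r₁ (x.1.1, x.2.1)))
        + (∑ x : (I₁ × I₂) × (Q₁.ι × Q₂.ι), P x * Real.logb 2 (r₂ (x.1.2, x.2.2))) := by
      rw [← Finset.sum_add_distrib]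
      apply Finset.sum_congr rfl
      intro x _
      rcases eq_or_lt_of_le (hP0 x) with h | h
      · rw [← h]; ring
      · rw [Real.logb_mul (ne_of_gt (hfac x h).1) (ne_of_gt (hfac x h).2)]; ring
    -- marginalizing the two cross-entropy sums
    have marg₁ : ∑ x : (I₁ × I₂) × (Q₁.ι × Q₂.ι), P x * Real.logb 2 (r₁ (x.1.1, x.2.1))
        = ∑ y : I₁ × Q₁.ι, F₁ y * Real.logb 2 (r₁ y) := by
      rw [Fintype.sum_equiv (Equiv.prodProdProdComm I₁ I₂ Q₁.ι Q₂.ι)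
        (fun x => P x * Real.logb 2 (r₁ (x.1.1, x.2.1)))
        (fun w : (I₁ × Q₁.ι) × (I₂ × Q₂.ι) =>
          P ((w.1.1, w.2.1), (w.1.2, w.2.2)) * Real.logb 2 (r₁ w.1))
        (by rintro ⟨⟨i₁, i₂⟩, ⟨j₁, j₂⟩⟩; rfl)]
      rw [Fintype.sum_prod_type]
      apply Finset.sum_congr rfl
      intro y _
      show ∑ z : I₂ × Q₂.ι, P ((y.1, z.1), (y.2, z.2)) * Real.logb 2 (r₁ y) = _
      rw [← Finset.sum_mul, hM₁ y]
    have marg₂ : ∑ x : (I₁ × I₂) × (Q₁.ι × Q₂.ι), P x * Real.logb 2 (r₂ (x.1.2, x.2.2))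
        = ∑ y : I₂ × Q₂.ι, F₂ y * Real.logb 2 (r₂ y) := by
      rw [Fintype.sum_equiv
        ((Equiv.prodProdProdComm I₁ I₂ Q₁.ι Q₂.ι).trans (Equiv.prodComm _ _))
        (fun x => P x * Real.logb 2 (r₂ (x.1.2, x.2.2)))
        (fun w : (I₂ × Q₂.ι) × (I₁ × Q₁.ι) =>
          P ((w.2.1, w.1.1), (w.2.2, w.1.2)) * Real.logb 2 (r₂ w.1))
        (by rintro ⟨⟨i₁, i₂⟩, ⟨j₁, j₂⟩⟩; rfl)]
      rw [Fintype.sum_prod_type]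
      apply Finset.sum_congr rfl
      intro y _
      show ∑ z : I₁ × Q₁.ι, P ((z.1, y.1), (z.2, y.2)) * Real.logb 2 (r₂ y) = _
      rw [← Finset.sum_mul, hM₂ y]
    -- the conditional entropies of the marginal ensembles are the cross entropies
    have eqA : condEntropy F₁ = - ∑ y : I₁ × Q₁.ι, F₁ y * Real.logb 2 (r₁ y) :=
      aux_condEntropy_eq_cross F₁ hF₁0
    have eqB : condEntropy F₂ = - ∑ y : I₂ × Q₂.ι, F₂ y * Real.logb 2 (r₂ y) :=
      aux_condEntropy_eq_cross F₂ hF₂0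
    -- conclude
    have hmem : condEntropy P ∈ SS := ⟨Qp, rfl⟩
    have h1 : sInf SS ≤ condEntropy P := csInf_le hSSbdd hmem
    have h2 : condEntropy P ≤ condEntropy F₁ + condEntropy F₂ := by
      rw [eqA, eqB]
      calc condEntropy P ≤ _ := gibbs
        _ = _ := by rw [split, marg₁, marg₂]; ring
    exact le_trans h1 (le_trans h2 (by rfl))
  -- wrap up with infimum manipulations
  show sInf SS ≤ sInf SA + sInf SB
  have h1 : ∀ b ∈ SB, sInf SS ≤ sInf SA + b := by
    intro b hb
    have : sInf SS - b ≤ sInf SA :=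
      le_csInf hSAne fun a ha => by linarith [key a ha b hb]
    linarith
  have h2 : sInf SS - sInf SA ≤ sInf SB :=
    le_csInf hSBne fun b hb => by linarith [h1 b hb]
  linarith

end
end

section
/- Let {p_i, ρ_i}_{i∈I} be an ensemble on a finite-dimensional complex Hilbert space E whose average state ρ̄ = ∑_i p_i ρ_i is positive definite. Then the family M = (M_i)_{i∈I} with M_i = ρ̄^{−1/2} p_i ρ_i ρ̄^{−1/2} is a POVM on E, and the accessible equivocation of the ensemble equals the constrained minimum output entropy of the qc-channel of M at ρ̄: S_acc({p_i, ρ_i}) = Ĥ(M | ρ̄). -/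
open scoped BigOperators ComplexOrder

noncomputable section

open Kronecker

/-- A finite ensemble of density matrices on the space with index type `n`. -/
structure FinEnsemble (n : Type) [Fintype n] where
  ι : Type
  [fin : Fintype ι]
  q : ι → ℝ
  ψ : ι → Matrix n n ℂ
  hq : (∀ j, 0 ≤ q j) ∧ ∑ j, q j = 1
  hψ : ∀ j, IsDensityMatrix (ψ j)

attribute [instance] FinEnsemble.fin
noncomputable def Matrix.PosSemidef.sqrt {n 𝕜 : Type*} [Fintype n] [DecidableEq n] [RCLike 𝕜]
    {A : Matrix n n 𝕜} (hA : A.PosSemidef) : Matrix n n 𝕜 :=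
  hA.1.eigenvectorUnitary.1 * Matrix.diagonal ((↑) ∘ (√·) ∘ hA.1.eigenvalues) *
  (star hA.1.eigenvectorUnitary : Matrix n n 𝕜)

lemma Matrix.PosSemidef.posSemidef_sqrt {n : Type} [Fintype n] [DecidableEq n]
    {A : Matrix n n ℂ} (hA : A.PosSemidef) : hA.sqrt.PosSemidef := by
  unfold Matrix.PosSemidef.sqrt
  have := (Matrix.PosSemidef.diagonal (d := ((↑) ∘ (√·) ∘ hA.1.eigenvalues : n → ℂ))
    (fun i => by simp [Real.sqrt_nonneg])).mul_mul_conjTranspose_same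
    (hA.1.eigenvectorUnitary : Matrix n n ℂ)
  exact this

lemma Matrix.PosSemidef.sqrt_mul_self {n : Type} [Fintype n] [DecidableEq n]
    {A : Matrix n n ℂ} (hA : A.PosSemidef) : hA.sqrt * hA.sqrt = A := by
  unfold Matrix.PosSemidef.sqrt
  conv_rhs => rw [hA.1.spectral_theorem, Unitary.conjStarAlgAut_apply]
  have hU : (star hA.1.eigenvectorUnitary : Matrix n n ℂ) * hA.1.eigenvectorUnitary.1 = 1 :=
    Unitary.coe_star_mul_self _
  simp only [mul_assoc]
  rw [← mul_assoc (star _) _ _, hU, one_mul, ← mul_assoc (Matrix.diagonal _),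
    Matrix.diagonal_mul_diagonal]
  congr 3
  funext i
  simp only [Function.comp_apply]
  rw [← RCLike.ofReal_mul, Real.mul_self_sqrt (hA.eigenvalues_nonneg i)]

namespace SaccAux

open Matrix

variable {n : Type} [Fintype n] [DecidableEq n]

omit [DecidableEq n] in
lemma smul_posSemidef {c : ℝ} (hc : 0 ≤ c) {A : Matrix n n ℂ} (hA : A.PosSemidef) :
    (c • A).PosSemidef := by
  refine ⟨?_, fun x => ?_⟩
  · unfold Matrix.IsHermitian
    rw [Matrix.conjTranspose_smul, star_trivial, hA.1]
  · exact (hA.smul hc).2 x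

omit [DecidableEq n] in
lemma trace_psd_nonneg {A : Matrix n n ℂ} (hA : A.PosSemidef) : 0 ≤ A.trace := by
  obtain ⟨B, rfl⟩ : ∃ B : Matrix n n ℂ, A = Bᴴ * B := by
    classical
    exact ⟨hA.sqrt, by rw [hA.posSemidef_sqrt.1, hA.sqrt_mul_self]⟩
  rw [Matrix.trace]
  refine Finset.sum_nonneg fun i _ => ?_
  have : (Bᴴ * B).diag i = ∑ j, star (B j i) * B j i := by
    simp [Matrix.diag, Matrix.mul_apply, Matrix.conjTranspose_apply]
  rw [this]
  exact Finset.sum_nonneg fun j _ => star_mul_self_nonneg _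

omit [DecidableEq n] in
lemma trace_psd_eq_zero {A : Matrix n n ℂ} (hA : A.PosSemidef) (h : A.trace = 0) :
    A = 0 := by
  obtain ⟨B, rfl⟩ : ∃ B : Matrix n n ℂ, A = Bᴴ * B := by
    classical
    exact ⟨hA.sqrt, by rw [hA.posSemidef_sqrt.1, hA.sqrt_mul_self]⟩
  suffices hB : B = 0 by rw [hB]; simp
  have hdiag : ∀ i, (Bᴴ * B).diag i = ∑ j, star (B j i) * B j i := by
    intro i; simp [Matrix.diag, Matrix.mul_apply, Matrix.conjTranspose_apply]
  have hnn : ∀ i ∈ Finset.univ, (0:ℂ) ≤ (Bᴴ * B).diag i := by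
    intro i _
    rw [hdiag i]
    exact Finset.sum_nonneg fun j _ => star_mul_self_nonneg _
  have h0 : ∀ i ∈ Finset.univ, (Bᴴ * B).diag i = 0 :=
    (Finset.sum_eq_zero_iff_of_nonneg hnn).mp h
  ext j i
  have : dotProduct (star fun k => B k i) (fun k => B k i) = 0 := by
    have := h0 i (Finset.mem_univ i)
    rw [hdiag i] at this
    simpa [dotProduct] using this
  have := dotProduct_star_self_eq_zero.mp this
  simpa using congrFun this j

lemma trace_mul_psd_nonneg {A B : Matrix n n ℂ} (hA : A.PosSemidef) (hB : B.PosSemidef) :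
    0 ≤ (A * B).trace := by
  have h1 : A * B = hA.sqrt * (hA.sqrt * B) := by
    rw [← Matrix.mul_assoc, hA.sqrt_mul_self]
  rw [h1, Matrix.trace_mul_comm]
  have hpsd := hB.conjTranspose_mul_mul_same hA.sqrt
  rw [hA.posSemidef_sqrt.1] at hpsd
  exact trace_psd_nonneg hpsd

lemma trace_mul_psd_re_nonneg {A B : Matrix n n ℂ} (hA : A.PosSemidef) (hB : B.PosSemidef) :
    0 ≤ ((A * B).trace).re :=
  (Complex.nonneg_iff.mp (trace_mul_psd_nonneg hA hB)).1

lemma trace_mul_psd_real {A B : Matrix n n ℂ} (hA : A.PosSemidef) (hB : B.PosSemidef) :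
    (A * B).trace = ((((A * B).trace).re : ℝ) : ℂ) := by
  have h := Complex.nonneg_iff.mp (trace_mul_psd_nonneg hA hB)
  exact Complex.ext (by simp) (by simp [← h.2])

end SaccAux

lemma condEntropy_eq_sum {A B : Type*} [Fintype A] [Fintype B] (P : A × B → ℝ)
    (hP : ∀ x, 0 ≤ P x) (r : B → A → ℝ)
    (h : ∀ b, (∑ a, P (a, b)) ≠ 0 → ∀ a, P (a, b) = (∑ a', P (a', b)) * r b a) :
    condEntropy P = ∑ b, (∑ a, P (a, b)) * shannonEntropy (r b) := by
  have key : ∀ b : B, (∑ a, P (a, b)) * Real.logb 2 (∑ a, P (a, b))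
      - ∑ a, P (a, b) * Real.logb 2 (P (a, b))
      = (∑ a, P (a, b)) * shannonEntropy (r b) := by
    intro b
    by_cases hq : (∑ a, P (a, b)) = 0
    · have hz : ∀ a, P (a, b) = 0 := by
        intro a
        exact (Finset.sum_eq_zero_iff_of_nonneg (fun a _ => hP (a, b))).mp hq a
          (Finset.mem_univ a)
      simp [hq, hz]
    · have hr := h b hq
      have hsum_r : ∑ a, r b a = 1 := by
        have h1 : (∑ a, P (a, b)) * (∑ a, r b a) = (∑ a, P (a, b)) * 1 := by
          rw [mul_one, Finset.mul_sum]
          exact (Finset.sum_congr rfl fun a _ => (hr a).symm)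
        exact mul_left_cancel₀ hq h1
      have term : ∀ a, P (a, b) * Real.logb 2 (P (a, b))
          = (∑ a', P (a', b)) * r b a * Real.logb 2 (∑ a', P (a', b))
            + (∑ a', P (a', b)) * (r b a * Real.logb 2 (r b a)) := by
        intro a
        rcases eq_or_ne (r b a) 0 with h0 | h0
        · simp [hr a, h0]
        · rw [hr a, Real.logb_mul hq h0]; ring
      rw [Finset.sum_congr rfl fun a _ => term a, Finset.sum_add_distrib,
        ← Finset.mul_sum]
      have h2 : ∑ a, (∑ a', P (a', b)) * r b a * Real.logb 2 (∑ a', P (a', b))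
          = (∑ a', P (a', b)) * Real.logb 2 (∑ a', P (a', b)) := by
        rw [← Finset.sum_mul, ← Finset.mul_sum, hsum_r, mul_one]
      rw [h2]
      simp only [shannonEntropy]
      ring
  simp only [condEntropy, shannonEntropy]
  rw [Fintype.sum_prod_type, Finset.sum_comm, neg_sub_neg, ← Finset.sum_sub_distrib]
  exact Finset.sum_congr rfl fun b _ => (key b).trans (by simp only [shannonEntropy])

/-- for an ensemble `{p_i, ρ_i}` with positive definite average state
`ρ̄ = ∑ p_i ρ_i`, the family `M_i = ρ̄^{-1/2} p_i ρ_i ρ̄^{-1/2}` is a POVM, and the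
accessible equivocation of the ensemble equals the constrained minimum output entropy
`Ĥ(M | ρ̄)` of the qc-channel of `M`. -/
theorem sacc_eq_constrained_min_output_entropy
    {D : ℕ} {I : Type} [Fintype I]
    (p : I → ℝ) (hp : IsProbDist p)
    (ρ : I → Matrix (Fin D) (Fin D) ℂ) (hρ : ∀ i, IsDensityMatrix (ρ i))
    (hbar : (∑ i, p i • ρ i).PosDef) :
    (∀ i, ((hbar.posSemidef.sqrt)⁻¹ * (p i • ρ i) * (hbar.posSemidef.sqrt)⁻¹).PosSemidef) ∧
    (∑ i, (hbar.posSemidef.sqrt)⁻¹ * (p i • ρ i) * (hbar.posSemidef.sqrt)⁻¹) = 1 ∧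
    Sacc p ρ
      = sInf { h : ℝ | ∃ E : FinEnsemble (Fin D),
          (∑ j, E.q j • E.ψ j) = ∑ i, p i • ρ i ∧
          h = ∑ j, E.q j * shannonEntropy (fun i =>
            ((E.ψ j * ((hbar.posSemidef.sqrt)⁻¹ * (p i • ρ i)
                * (hbar.posSemidef.sqrt)⁻¹)).trace).re) } := by
  classical
  obtain ⟨hp0, hp1⟩ := hp
  set ρbar := ∑ i, p i • ρ i with hρbar
  set S := hbar.posSemidef.sqrt with hSdef
  have hSpsd : S.PosSemidef := hbar.posSemidef.posSemidef_sqrt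
  have hSS : S * S = ρbar := hbar.posSemidef.sqrt_mul_self
  have hdet : IsUnit S.det := by
    have h2 : S.det * S.det = ρbar.det := by rw [← Matrix.det_mul, hSS]
    have hpos := hbar.det_pos
    refine isUnit_iff_ne_zero.mpr fun h0 => ?_
    rw [h0, mul_zero] at h2
    exact (ne_of_gt hpos) h2.symm
  set T := S⁻¹ with hTdef
  have hTS : T * S = 1 := Matrix.nonsing_inv_mul S hdet
  have hST : S * T = 1 := Matrix.mul_nonsing_inv S hdet
  have hTh : T.conjTranspose = T := hSpsd.1.inv
  have hρbar_psd : ρbar.PosSemidef := hbar.posSemidef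
  have hMpsd : ∀ i, (T * (p i • ρ i) * T).PosSemidef := by
    intro i
    have h1 : ((p i) • ρ i).PosSemidef := SaccAux.smul_posSemidef (hp0 i) (hρ i).1
    have h2 := h1.conjTranspose_mul_mul_same T
    rwa [hTh] at h2
  have hTρT : T * ρbar * T = 1 := by
    rw [← hSS, ← Matrix.mul_assoc T S S, hTS, Matrix.one_mul, hST]
  have hsumM : ∑ i, T * (p i • ρ i) * T = 1 := by
    have : ∑ i, T * (p i • ρ i) * T = T * ρbar * T := by
      rw [hρbar]
      simp only [← Finset.sum_mul, ← Finset.mul_sum]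
    rw [this, hTρT]
  have htrρbar : ρbar.trace = 1 := by
    have : ρbar.trace = ∑ i, (p i • ρ i).trace := by rw [hρbar, Matrix.trace_sum]
    rw [this]
    have : ∀ i, (p i • ρ i).trace = ((p i : ℝ) : ℂ) := by
      intro i
      rw [Matrix.trace_smul, (hρ i).2, Complex.real_smul, mul_one]
    rw [Finset.sum_congr rfl fun i _ => this i, ← Complex.ofReal_sum, hp1,
      Complex.ofReal_one]
  refine ⟨hMpsd, hsumM, ?_⟩
  unfold Sacc
  refine congrArg sInf (Set.ext fun h => ?_)
  simp only [Set.mem_setOf_eq]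
  constructor
  · -- POVM direction : from a POVM build an ensemble
    rintro ⟨Q, rfl⟩
    set q : Q.ι → ℝ := fun j => ((ρbar * Q.elem j).trace).re with hqdef
    have hq0 : ∀ j, 0 ≤ q j := fun j =>
      SaccAux.trace_mul_psd_re_nonneg hρbar_psd (Q.psd j)
    have hqtr : ∀ j, (ρbar * Q.elem j).trace = ((q j : ℝ) : ℂ) := fun j =>
      SaccAux.trace_mul_psd_real hρbar_psd (Q.psd j)
    have hqsum : ∑ j, q j = 1 := by
      have h1 : ∑ j, (ρbar * Q.elem j).trace = 1 := by
        rw [← Matrix.trace_sum, ← Finset.mul_sum, Q.sum_eq_one, Matrix.mul_one, htrρbar]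
      have h2 : (∑ j, (ρbar * Q.elem j).trace).re = 1 := by rw [h1]; simp
      rw [← h2, Complex.re_sum]
    have hmarg : ∀ j, (∑ i, p i * ((ρ i * Q.elem j).trace).re) = q j := by
      intro j
      have expand : (ρbar * Q.elem j).trace = ∑ i, ((p i : ℝ) : ℂ) * (ρ i * Q.elem j).trace := by
        rw [hρbar, Finset.sum_mul, Matrix.trace_sum]
        exact Finset.sum_congr rfl fun i _ => by
          rw [Matrix.smul_mul, Matrix.trace_smul, Complex.real_smul]
      rw [hqdef]
      show ∑ i, p i * ((ρ i * Q.elem j).trace).re = ((ρbar * Q.elem j).trace).re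
      rw [expand, Complex.re_sum]
      exact Finset.sum_congr rfl fun i _ => (Complex.re_ofReal_mul _ _).symm
    set ψ : Q.ι → Matrix (Fin D) (Fin D) ℂ :=
      fun j => if q j = 0 then ρbar else (q j)⁻¹ • (S * Q.elem j * S) with hψdef
    have hSQS : ∀ j, (S * Q.elem j * S).PosSemidef := by
      intro j
      have := (Q.psd j).conjTranspose_mul_mul_same S
      rwa [hSpsd.1] at this
    have htrSQS : ∀ j, (S * Q.elem j * S).trace = ((q j : ℝ) : ℂ) := by
      intro j
      rw [Matrix.trace_mul_cycle, hSS, hqtr]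
    have hzero : ∀ j, q j = 0 → S * Q.elem j * S = 0 := by
      intro j hj
      refine SaccAux.trace_psd_eq_zero (hSQS j) ?_
      rw [htrSQS j, hj, Complex.ofReal_zero]
    have hψdm : ∀ j, IsDensityMatrix (ψ j) := by
      intro j
      by_cases hj : q j = 0
      · simp only [hψdef]
        rw [if_pos hj]
        exact ⟨hρbar_psd, htrρbar⟩
      · simp only [hψdef]
        rw [if_neg hj]
        refine ⟨SaccAux.smul_posSemidef (inv_nonneg.mpr (hq0 j)) (hSQS j), ?_⟩
        rw [Matrix.trace_smul, htrSQS j, Complex.real_smul, ← Complex.ofReal_mul,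
          inv_mul_cancel₀ hj, Complex.ofReal_one]
    have hqψ : ∑ j, q j • ψ j = ρbar := by
      have key : ∀ j, q j • ψ j = S * Q.elem j * S := by
        intro j
        by_cases hj : q j = 0
        · simp only [hψdef]
          rw [if_pos hj, hj, zero_smul, hzero j hj]
        · simp only [hψdef]
          rw [if_neg hj, smul_smul, mul_inv_cancel₀ hj, one_smul]
      rw [Finset.sum_congr rfl fun j _ => key j]
      have : ∑ j, S * Q.elem j * S = S * (∑ j, Q.elem j) * S := by
        simp only [← Finset.sum_mul, ← Finset.mul_sum]
      rw [this, Q.sum_eq_one, Matrix.mul_one, hSS]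
    -- value equality via the chain rule
    have hP : ∀ x : I × Q.ι, 0 ≤ p x.1 * ((ρ x.1 * Q.elem x.2).trace).re := fun x =>
      mul_nonneg (hp0 x.1) (SaccAux.trace_mul_psd_re_nonneg (hρ x.1).1 (Q.psd x.2))
    have hcond : ∀ j, (∑ i, p i * ((ρ i * Q.elem j).trace).re) ≠ 0 →
        ∀ i, p i * ((ρ i * Q.elem j).trace).re
          = (∑ i', p i' * ((ρ i' * Q.elem j).trace).re)
            * ((ψ j * (T * (p i • ρ i) * T)).trace).re := by
      intro j hne i
      rw [hmarg j] at hne ⊢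
      have hψj : ψ j = (q j)⁻¹ • (S * Q.elem j * S) := by
        simp only [hψdef]; rw [if_neg hne]
      have hmat : S * Q.elem j * S * (T * (p i • ρ i) * T)
          = S * (Q.elem j * ((p i • ρ i) * T)) := by
        simp only [Matrix.mul_assoc]
        rw [show S * (T * ((p i • ρ i) * T)) = (p i • ρ i) * T from by
          rw [← Matrix.mul_assoc, hST, Matrix.one_mul]]
      have htrace : (ψ j * (T * (p i • ρ i) * T)).trace
          = ((q j)⁻¹ : ℝ) • (((p i : ℝ) : ℂ) * (ρ i * Q.elem j).trace) := by
        rw [hψj, Matrix.smul_mul, Matrix.trace_smul, hmat]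
        congr 1
        rw [Matrix.trace_mul_comm]
        simp only [Matrix.mul_assoc]
        rw [hTS, Matrix.mul_one, Matrix.mul_smul, Matrix.trace_smul,
          Matrix.trace_mul_comm, Complex.real_smul]
      have hri : ((ψ j * (T * (p i • ρ i) * T)).trace).re
          = (q j)⁻¹ * (p i * ((ρ i * Q.elem j).trace).re) := by
        rw [htrace, Complex.real_smul, Complex.re_ofReal_mul, Complex.re_ofReal_mul]
      rw [hri, ← mul_assoc, mul_inv_cancel₀ hne, one_mul]
    refine ⟨⟨Q.ι, q, ψ, ⟨hq0, hqsum⟩, hψdm⟩, hqψ, ?_⟩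
    have hval := condEntropy_eq_sum
      (fun x : I × Q.ι => p x.1 * ((ρ x.1 * Q.elem x.2).trace).re) hP
      (fun j i => ((ψ j * (T * (p i • ρ i) * T)).trace).re) hcond
    exact hval.trans (Finset.sum_congr rfl fun j _ => by rw [hmarg j])
  · -- ensemble direction : from an ensemble build a POVM
    rintro ⟨E, hE1, rfl⟩
    have hQpsd : ∀ j, (E.q j • (T * E.ψ j * T)).PosSemidef := by
      intro j
      have h1 := (E.hψ j).1.conjTranspose_mul_mul_same T
      rw [hTh] at h1
      exact SaccAux.smul_posSemidef (E.hq.1 j) h1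
    have hQsum : ∑ j, E.q j • (T * E.ψ j * T) = 1 := by
      have h1 : ∀ j, E.q j • (T * E.ψ j * T) = T * (E.q j • E.ψ j) * T := by
        intro j; rw [Matrix.mul_smul, Matrix.smul_mul]
      rw [Finset.sum_congr rfl fun j _ => h1 j]
      have h2 : ∑ j, T * (E.q j • E.ψ j) * T = T * (∑ j, E.q j • E.ψ j) * T := by
        simp only [← Finset.sum_mul, ← Finset.mul_sum]
      rw [h2, hE1, hTρT]
    have key : ∀ (j : E.ι) (i : I),
        p i * ((ρ i * (E.q j • (T * E.ψ j * T))).trace).re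
          = E.q j * ((E.ψ j * (T * (p i • ρ i) * T)).trace).re := by
      intro j i
      have tre : (E.ψ j * (T * (p i • ρ i) * T)).trace
          = ((p i : ℝ) : ℂ) * (ρ i * (T * E.ψ j * T)).trace := by
        rw [Matrix.mul_smul, Matrix.smul_mul, Matrix.mul_smul, Matrix.trace_smul,
          Complex.real_smul]
        congr 1
        simpa only [Matrix.mul_assoc] using Matrix.trace_mul_comm (E.ψ j * T) (ρ i * T)
      rw [Matrix.mul_smul, Matrix.trace_smul, Complex.real_smul,
        Complex.re_ofReal_mul, tre, Complex.re_ofReal_mul]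
      ring
    have hsMre : ∀ j, (∑ i, ((E.ψ j * (T * (p i • ρ i) * T)).trace).re) = 1 := by
      intro j
      rw [← Complex.re_sum, ← Matrix.trace_sum, ← Finset.mul_sum, hsumM,
        Matrix.mul_one, (E.hψ j).2, Complex.one_re]
    have hm : ∀ j, (∑ i, p i * ((ρ i * (E.q j • (T * E.ψ j * T))).trace).re) = E.q j := by
      intro j
      rw [Finset.sum_congr rfl fun i _ => key j i, ← Finset.mul_sum, hsMre j, mul_one]
    refine ⟨⟨E.ι, fun j => E.q j • (T * E.ψ j * T), hQpsd, hQsum⟩, ?_⟩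
    have hP : ∀ x : I × E.ι, 0 ≤ p x.1 * ((ρ x.1 * (E.q x.2 • (T * E.ψ x.2 * T))).trace).re :=
      fun x => mul_nonneg (hp0 x.1)
        (SaccAux.trace_mul_psd_re_nonneg (hρ x.1).1 (hQpsd x.2))
    have hcond : ∀ j, (∑ i, p i * ((ρ i * (E.q j • (T * E.ψ j * T))).trace).re) ≠ 0 →
        ∀ i, p i * ((ρ i * (E.q j • (T * E.ψ j * T))).trace).re
          = (∑ i', p i' * ((ρ i' * (E.q j • (T * E.ψ j * T))).trace).re)
            * ((E.ψ j * (T * (p i • ρ i) * T)).trace).re := by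
      intro j _ i
      rw [hm j]
      exact key j i
    have hval := condEntropy_eq_sum
      (fun x : I × E.ι => p x.1 * ((ρ x.1 * (E.q x.2 • (T * E.ψ x.2 * T))).trace).re) hP
      (fun j i => ((E.ψ j * (T * (p i • ρ i) * T)).trace).re) hcond
    exact (hval.trans (Finset.sum_congr rfl fun j _ => by rw [hm j])).symm

end
end
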